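/- arXiv:1802.08877 — 4 statements merged into one kernel-verified Lean document; each statement's English description precedes it below -/
import Mathlib

section
/- Let G be a nilpotent group of class at most 5 and x, y ∈ G. Then [x,y,x,y,x] = [x,y,y,x,x] and [x,y,x,y,y] = [x,y,y,x,y], where commutators are left-normed. -/
/-- The commutator convention of the paper: `[x,y] = x⁻¹y⁻¹xy`. -/
def pcomm {G : Type*} [Group G] (x y : G) : G := x⁻¹ * y⁻¹ * x * y

/-- Left-normed iterated commutator `[x, _k y]` with `[x, _0 y] = x`. -/
def pcommIter {G : Type*} [Group G] (x y : G) : ℕ → G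
  | 0 => x
  | k + 1 => pcomm (pcommIter x y k) y

open scoped commutatorElement

lemma pcomm_eq_commutatorElement {G : Type*} [Group G] (a b : G) :
    pcomm a b = ⁅a⁻¹, b⁻¹⁆ := by
  simp [pcomm, commutatorElement_def, mul_assoc]

lemma pcomm_mem_commutator {G : Type*} [Group G] {H K : Subgroup G} {a b : G}
    (ha : a ∈ H) (hb : b ∈ K) : pcomm a b ∈ ⁅H, K⁆ := by
  rw [pcomm_eq_commutatorElement]
  exact Subgroup.commutator_mem_commutator (H.inv_mem ha) (K.inv_mem hb)

/-- Three subgroups lemma relative to a normal subgroup. -/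
lemma three_subgroups_le {G : Type*} [Group G] {H₁ H₂ H₃ N : Subgroup G} [N.Normal]
    (h1 : ⁅⁅H₂, H₃⁆, H₁⁆ ≤ N) (h2 : ⁅⁅H₃, H₁⁆, H₂⁆ ≤ N) : ⁅⁅H₁, H₂⁆, H₃⁆ ≤ N := by
  let π := QuotientGroup.mk' N
  have hker : π.ker = N := QuotientGroup.ker_mk' N
  have key : ∀ A B C : Subgroup G, ⁅⁅A, B⁆, C⁆ ≤ N ↔
      ⁅⁅A.map π, B.map π⁆, C.map π⁆ = ⊥ := by
    intro A B C
    rw [← Subgroup.map_commutator, ← Subgroup.map_commutator,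
      Subgroup.map_eq_bot_iff, hker]
  rw [key] at *
  exact Subgroup.commutator_commutator_eq_bot_of_rotate h1 h2

lemma lcs_commutator_le {G : Type*} [Group G] :
    ∀ (n m : ℕ), ⁅(⊤ : Subgroup G).lowerCentralSeries m, (⊤ : Subgroup G).lowerCentralSeries n⁆
      ≤ (⊤ : Subgroup G).lowerCentralSeries (m + n + 1) := by
  intro n
  induction n with
  | zero =>
    intro m
    rw [show (⊤ : Subgroup G).lowerCentralSeries 0 = ⊤ from rfl]
    exact le_of_eq (Subgroup.lowerCentralSeries_succ _ m).symm
  | succ n ih =>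
    intro m
    rw [Subgroup.lowerCentralSeries_succ _ n,
      Subgroup.commutator_comm ((⊤ : Subgroup G).lowerCentralSeries m)]
    have e : m + (n + 1) + 1 = (m + n + 1) + 1 := by ring
    rw [e]
    apply three_subgroups_le
    · -- ⁅⁅⊤, L m⁆, L n⁆ ≤ L (m+n+2)
      have : ⁅(⊤ : Subgroup G), (⊤ : Subgroup G).lowerCentralSeries m⁆ ≤ (⊤ : Subgroup G).lowerCentralSeries (m + 1) := by
        rw [Subgroup.commutator_comm]
        exact le_of_eq (Subgroup.lowerCentralSeries_succ _ m).symm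
      calc ⁅⁅(⊤ : Subgroup G), (⊤ : Subgroup G).lowerCentralSeries m⁆, (⊤ : Subgroup G).lowerCentralSeries n⁆
          ≤ ⁅(⊤ : Subgroup G).lowerCentralSeries (m + 1), (⊤ : Subgroup G).lowerCentralSeries n⁆ :=
            Subgroup.commutator_mono this le_rfl
        _ ≤ (⊤ : Subgroup G).lowerCentralSeries (m + 1 + n + 1) := ih (m + 1)
        _ = (⊤ : Subgroup G).lowerCentralSeries (m + n + 1 + 1) := by ring_nf
    · -- ⁅⁅L m, L n⁆, ⊤⁆ ≤ L (m+n+2)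
      calc ⁅⁅(⊤ : Subgroup G).lowerCentralSeries m, (⊤ : Subgroup G).lowerCentralSeries n⁆, (⊤ : Subgroup G)⁆
          ≤ ⁅(⊤ : Subgroup G).lowerCentralSeries (m + n + 1), (⊤ : Subgroup G)⁆ :=
            Subgroup.commutator_mono (ih m) le_rfl
        _ = (⊤ : Subgroup G).lowerCentralSeries (m + n + 1 + 1) := (Subgroup.lowerCentralSeries_succ _ _).symm

lemma pcomm_mem_lcs_succ {G : Type*} [Group G] {a : G} {n : ℕ}
    (ha : a ∈ (⊤ : Subgroup G).lowerCentralSeries n) (b : G) :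
    pcomm a b ∈ (⊤ : Subgroup G).lowerCentralSeries (n + 1) := by
  rw [Subgroup.lowerCentralSeries_succ _]
  exact pcomm_mem_commutator ha (Subgroup.mem_top b)

lemma pcomm_central_mul {G : Type*} [Group G] {w : G}
    (hw : ∀ g : G, w * g = g * w) (v z : G) : pcomm (v * w) z = pcomm v z := by
  unfold pcomm
  have h := hw (v⁻¹ * z⁻¹ * v)
  have e : (v * w)⁻¹ * z⁻¹ * (v * w) * z = w⁻¹ * ((v⁻¹ * z⁻¹ * v) * w) * z := by
    group
  rw [e, ← h]
  group

/-- in a nilpotent group of class at most 5,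
`[x,y,x,y,x] = [x,y,y,x,x]` and `[x,y,x,y,y] = [x,y,y,x,y]`. -/
theorem class_le_five_weight_five_identities {G : Type*} [Group G]
    (h5 : (⊤ : Subgroup G).lowerCentralSeries 5 = ⊥) (x y : G) :
    pcomm (pcomm (pcomm (pcomm x y) x) y) x
        = pcomm (pcomm (pcomm (pcomm x y) y) x) x ∧
      pcomm (pcomm (pcomm (pcomm x y) x) y) y
        = pcomm (pcomm (pcomm (pcomm x y) y) x) y := by
  set c := pcomm x y with hc
  set u := pcomm (pcomm c x) y with hu
  set v := pcomm (pcomm c y) x with hv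
  set w1 := pcomm (pcomm c x) (pcomm c y) with hw1def
  set w2 := pcomm (pcomm c (y * x)) c with hw2def
  -- memberships
  have hc1 : c ∈ (⊤ : Subgroup G).lowerCentralSeries 1 := by
    have : (x : G) ∈ (⊤ : Subgroup G).lowerCentralSeries 0 := Subgroup.mem_top x
    exact pcomm_mem_lcs_succ this y
  have hcx : pcomm c x ∈ (⊤ : Subgroup G).lowerCentralSeries 2 := pcomm_mem_lcs_succ hc1 x
  have hcy : pcomm c y ∈ (⊤ : Subgroup G).lowerCentralSeries 2 := pcomm_mem_lcs_succ hc1 y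
  have hcyx : pcomm c (y * x) ∈ (⊤ : Subgroup G).lowerCentralSeries 2 := pcomm_mem_lcs_succ hc1 (y * x)
  -- w1 = 1
  have hw1 : w1 = 1 := by
    have : w1 ∈ ⁅(⊤ : Subgroup G).lowerCentralSeries 2, (⊤ : Subgroup G).lowerCentralSeries 2⁆ :=
      pcomm_mem_commutator hcx hcy
    have h5' : w1 ∈ (⊤ : Subgroup G).lowerCentralSeries 5 := lcs_commutator_le 2 2 this
    rw [h5] at h5'
    exact Subgroup.mem_bot.mp h5'
  -- w2 ∈ L4
  have hw2 : w2 ∈ (⊤ : Subgroup G).lowerCentralSeries 4 := by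
    have : w2 ∈ ⁅(⊤ : Subgroup G).lowerCentralSeries 2, (⊤ : Subgroup G).lowerCentralSeries 1⁆ :=
      pcomm_mem_commutator hcyx hc1
    exact lcs_commutator_le 1 2 this
  -- w2 is central
  have hw2c : ∀ g : G, w2 * g = g * w2 := by
    intro g
    have : pcomm w2 g ∈ (⊤ : Subgroup G).lowerCentralSeries 5 := pcomm_mem_lcs_succ hw2 g
    rw [h5, Subgroup.mem_bot] at this
    have h1 : w2⁻¹ * g⁻¹ * w2 * g = 1 := this
    have := mul_left_cancel (a := g * w2) (b := w2⁻¹ * g⁻¹ * w2 * g) (c := 1) ?_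
    · calc w2 * g = g * w2 * (w2⁻¹ * g⁻¹ * w2 * g) := by group
        _ = g * w2 * 1 := by rw [h1]
        _ = g * w2 := by group
    · rw [h1]
  -- the exact word identity
  have key : u = w1 * v * w2 := by
    rw [hu, hv, hw1def, hw2def, hc]
    unfold pcomm
    group
  have huv : u = v * w2 := by rw [key, hw1, one_mul]
  constructor
  · rw [huv]; exact pcomm_central_mul hw2c v x
  · rw [huv]; exact pcomm_central_mul hw2c v y
end

section
/- Let G be a group of exponent 4 in which every 2-generated subgroup is nilpotent of class at most 5 and [[a,b]^2, a] = 1 for all a, b. Then [a,b,a,w]^2 = 1 for all a, b ∈ G and w ∈ {a, b}; consequently γ₄(⟨a,b⟩)^2 = 1. -/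
open scoped commutatorElement

namespace ExpFourAux

open Subgroup

variable {Γ : Type*} [Group Γ]

/-! ### Commutator identities -/

private lemma idI1 (p q r : Γ) : ⁅p*q, r⁆ = p*⁅q,r⁆*p⁻¹ * ⁅p,r⁆ := by group

private lemma idI2 (p q r : Γ) : ⁅p, q*r⁆ = ⁅p,q⁆ * (q*⁅p,r⁆*q⁻¹) := by group

private lemma idI3 (p q : Γ) : ⁅p⁻¹, q⁆ = p⁻¹*⁅p,q⁆⁻¹*p := by group

private lemma idI4 (p q : Γ) : ⁅p, q⁻¹⁆ = q⁻¹*⁅p,q⁆⁻¹*q := by group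

private lemma idI5 (u v : Γ) : (u*v)^2 = u^2*v^2*(v⁻¹*⁅v⁻¹,u⁻¹⁆*v) := by
  simp only [pow_two]; group

private lemma idI6 (p q : Γ) :
    ⁅p,q⁆^2 = ⁅p^2,q⁆ * (⁅p,q⁆⁻¹ * ⁅⁅p,q⁆⁻¹,p⁆⁻¹ * ⁅p,q⁆) := by
  simp only [pow_two]; group

private lemma idI7 (p q : Γ) : ⁅p, q^2⁆ = ⁅p,q⁆^2 * ⁅⁅p,q⁆⁻¹, q⁆ := by
  simp only [pow_two]; group

private lemma idHW (c y u : Γ) :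
    ⁅u,⁅c,y⁆⁆ = (c*(u*⁅y,⁅u⁻¹,c⁻¹⁆⁆⁻¹*u⁻¹)*c⁻¹) * (c*(y*⁅c⁻¹,⁅y⁻¹,u⁆⁆⁻¹*y⁻¹)*c⁻¹) := by
  group

private lemma conj_sq (g x : Γ) : (g*x*g⁻¹)^2 = g*x^2*g⁻¹ := by
  simp only [pow_two]; group

private lemma conj_sq' (g x : Γ) : (g⁻¹*x*g)^2 = g⁻¹*x^2*g := by
  simp only [pow_two]; group

private lemma comm_one_right (g : Γ) : ⁅g, (1:Γ)⁆ = 1 := by group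

private lemma comm_one_left (g : Γ) : ⁅(1:Γ), g⁆ = 1 := by group

private lemma comm_eq_one_of_pc {s x : Γ} (h : s⁻¹ * x * s * x⁻¹ = 1) : ⁅s,x⁆ = 1 := by
  have h2 : x * s = s * x := by
    calc x*s = s*(s⁻¹*x*s*x⁻¹)*x := by group
    _ = s*x := by rw [h, mul_one]
  rw [commutatorElement_def, ← h2]
  group

/-! ### Lower central series membership lemmas -/

lemma lcs_conj_mem {n : ℕ} {x : Γ} (hx : x ∈ (⊤ : Subgroup Γ).lowerCentralSeries n) (g : Γ) :
    g*x*g⁻¹ ∈ (⊤ : Subgroup Γ).lowerCentralSeries n :=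
  (Subgroup.lowerCentralSeries_normal _ n).conj_mem x hx g

lemma lcs_conj_mem' {n : ℕ} {x : Γ} (hx : x ∈ (⊤ : Subgroup Γ).lowerCentralSeries n) (g : Γ) :
    g⁻¹*x*g ∈ (⊤ : Subgroup Γ).lowerCentralSeries n := by
  simpa using lcs_conj_mem hx g⁻¹

lemma mem_succ {n : ℕ} {x : Γ} (hx : x ∈ (⊤ : Subgroup Γ).lowerCentralSeries n) (y : Γ) :
    ⁅x,y⁆ ∈ (⊤ : Subgroup Γ).lowerCentralSeries (n+1) := by
  rw [Subgroup.lowerCentralSeries_succ]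
  exact commutator_mem_commutator hx (mem_top y)

lemma mem_succ' {n : ℕ} {y : Γ} (hy : y ∈ (⊤ : Subgroup Γ).lowerCentralSeries n) (x : Γ) :
    ⁅x,y⁆ ∈ (⊤ : Subgroup Γ).lowerCentralSeries (n+1) := by
  rw [← commutatorElement_inv]
  exact inv_mem (mem_succ hy x)

lemma mem_l1 (x y : Γ) : ⁅x,y⁆ ∈ (⊤ : Subgroup Γ).lowerCentralSeries 1 :=
  mem_succ (mem_top x) y

/-- `[γ_{i+1}, γ_{j+1}] ≤ γ_{i+j+2}` (with mathlib's 0-based indexing). -/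
lemma comm_mem : ∀ (i j : ℕ) {x u : Γ}, x ∈ (⊤ : Subgroup Γ).lowerCentralSeries i →
    u ∈ (⊤ : Subgroup Γ).lowerCentralSeries j → ⁅x,u⁆ ∈ (⊤ : Subgroup Γ).lowerCentralSeries (i+j+1) := by
  intro i
  induction i with
  | zero =>
    intro j x u _ hu
    have h := mem_succ' hu x
    simpa [Nat.zero_add] using h
  | succ i ih =>
    intro j x u hx hu
    rw [Subgroup.lowerCentralSeries_succ] at hx
    induction hx using closure_induction with
    | mem z hz =>
      obtain ⟨c, hc, y, -, rfl⟩ := hz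
      show ⁅⁅c,y⁆, u⁆ ∈ (⊤ : Subgroup Γ).lowerCentralSeries (i+1+j+1)
      have T1 : ⁅y, ⁅u⁻¹, c⁻¹⁆⁆⁻¹ ∈ (⊤ : Subgroup Γ).lowerCentralSeries (i+j+2) := by
        have h0 : ⁅c⁻¹,u⁻¹⁆ ∈ (⊤ : Subgroup Γ).lowerCentralSeries (i+j+1) := ih j (inv_mem hc) (inv_mem hu)
        have h1 : ⁅u⁻¹,c⁻¹⁆ ∈ (⊤ : Subgroup Γ).lowerCentralSeries (i+j+1) := by
          rw [← commutatorElement_inv]; exact inv_mem h0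
        exact inv_mem (mem_succ' h1 y)
      have T2 : ⁅c⁻¹, ⁅y⁻¹, u⁆⁆⁻¹ ∈ (⊤ : Subgroup Γ).lowerCentralSeries (i+j+2) := by
        have h0 : ⁅y⁻¹,u⁆ ∈ (⊤ : Subgroup Γ).lowerCentralSeries (j+1) := mem_succ' hu y⁻¹
        have h1 := ih (j+1) (inv_mem hc) h0
        have heq : i+(j+1)+1 = i+j+2 := by omega
        rw [heq] at h1
        exact inv_mem h1
      have heq2 : i+1+j+1 = i+j+2 := by omega
      rw [heq2, ← commutatorElement_inv, idHW c y u]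
      exact inv_mem (mul_mem (lcs_conj_mem (lcs_conj_mem T1 u) c)
        (lcs_conj_mem (lcs_conj_mem T2 y) c))
    | one =>
      rw [comm_one_left]
      exact one_mem _
    | mul p q hp hq pp pq =>
      rw [idI1]
      exact mul_mem (lcs_conj_mem pq p) pp
    | inv p hp pp =>
      rw [idI3]
      exact lcs_conj_mem' (inv_mem pp) p

/-! ### Exponent-4, class-2 computation -/

private lemma class2_sq {Δ : Type*} [Group Δ] (hc : ∀ p q r : Δ, ⁅p,q⁆ * r = r * ⁅p,q⁆)
    (he : ∀ p : Δ, p ^ 4 = 1) (y x : Δ) : ⁅y, x⁆ ^ 2 = 1 := by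
  have hz : ∀ r : Δ, ⁅y,x⁆ * r = r * ⁅y,x⁆ := hc y x
  have hyx : y * x = x * (y * ⁅y,x⁆) := by
    have h0 : y*x = ⁅y,x⁆*(x*y) := by group
    rw [h0, hz (x*y)]; simp only [mul_assoc]
  have r1 : ∀ t : Δ, y*(x*t) = x*(y*(⁅y,x⁆*t)) := fun t => by
    rw [← mul_assoc, hyx]; simp only [mul_assoc]
  have r3 : ∀ t : Δ, ⁅y,x⁆*(x*t) = x*(⁅y,x⁆*t) := fun t => by
    rw [← mul_assoc, hz x, mul_assoc]
  have r5 : ∀ t : Δ, ⁅y,x⁆*(y*t) = y*(⁅y,x⁆*t) := fun t => by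
    rw [← mul_assoc, hz y, mul_assoc]
  have key : (x*y)^4 = x^4*(y^4*⁅y,x⁆^6) := by
    simp only [pow_succ, pow_zero, one_mul, mul_assoc, r1, r3, r5, hyx, hz x, hz y]
  have h1 : x^4*(y^4*⁅y,x⁆^6) = 1 := by rw [← key, he]
  rw [he x, he y, one_mul, one_mul] at h1
  have h2 : ⁅y,x⁆^6 = ⁅y,x⁆^2*⁅y,x⁆^4 := by rw [← pow_add]
  rw [h2, he, mul_one] at h1
  exact h1

/-- In an exponent-4 group, `⁅g,h⁆² ∈ γ₃` (index 2). -/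
lemma comm_sq_mem_two (he : ∀ g : Γ, g^4 = 1) (g h : Γ) :
    ⁅g,h⁆^2 ∈ (⊤ : Subgroup Γ).lowerCentralSeries 2 := by
  set N := (⊤ : Subgroup Γ).lowerCentralSeries 2 with hNd
  have hcomm : ∀ p q r : Γ ⧸ N, ⁅p,q⁆ * r = r * ⁅p,q⁆ := by
    intro p q r
    obtain ⟨p, rfl⟩ := QuotientGroup.mk_surjective p
    obtain ⟨q, rfl⟩ := QuotientGroup.mk_surjective q
    obtain ⟨r, rfl⟩ := QuotientGroup.mk_surjective r
    have h1 : ⁅⁅p,q⁆, r⁆ ∈ N := mem_succ (mem_l1 p q) r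
    have h2 : ((⁅⁅p,q⁆,r⁆ : Γ) : Γ ⧸ N) = 1 := (QuotientGroup.eq_one_iff _).mpr h1
    have h3 : ⁅⁅(p : Γ ⧸ N), (q : Γ ⧸ N)⁆, (r : Γ ⧸ N)⁆ = 1 := by
      rw [← h2]; simp only [commutatorElement_def, QuotientGroup.mk_mul, QuotientGroup.mk_inv]
    exact commutatorElement_eq_one_iff_mul_comm.mp h3
  have he' : ∀ p : Γ ⧸ N, p^4 = 1 := by
    intro p
    obtain ⟨p, rfl⟩ := QuotientGroup.mk_surjective p
    rw [← QuotientGroup.mk_pow, he, QuotientGroup.mk_one]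
  have hcast : ((⁅g,h⁆ : Γ) : Γ ⧸ N) = ⁅(g : Γ ⧸ N), (h : Γ ⧸ N)⁆ := by
    simp [commutatorElement_def]
  have h5 : ((⁅g,h⁆^2 : Γ) : Γ ⧸ N) = 1 := by
    rw [QuotientGroup.mk_pow, hcast]
    exact class2_sq hcomm he' g h
  exact (QuotientGroup.eq_one_iff _).mp h5


/-! ### Consequences of nilpotency class ≤ 5 -/

lemma eq_one_of_high (hN : (⊤ : Subgroup Γ).lowerCentralSeries 5 = ⊥) {k : ℕ} (hk : 5 ≤ k) {x : Γ}
    (hx : x ∈ (⊤ : Subgroup Γ).lowerCentralSeries k) : x = 1 := by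
  have h := Subgroup.lowerCentralSeries_antitone _ hk hx
  rw [hN] at h
  simpa using h

lemma commute_high (hN : (⊤ : Subgroup Γ).lowerCentralSeries 5 = ⊥) {i j : ℕ} (h5 : 5 ≤ i+j+1) {x u : Γ}
    (hx : x ∈ (⊤ : Subgroup Γ).lowerCentralSeries i) (hu : u ∈ (⊤ : Subgroup Γ).lowerCentralSeries j) : Commute x u :=
  commutatorElement_eq_one_iff_commute.mp (eq_one_of_high hN h5 (comm_mem i j hx hu))

lemma lcs_succ_induction {n : ℕ} {p : Γ → Prop}
    (base : ∀ x ∈ (⊤ : Subgroup Γ).lowerCentralSeries n, ∀ y : Γ, p ⁅x, y⁆)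
    (one : p 1)
    (mul : ∀ u v : Γ, u ∈ (⊤ : Subgroup Γ).lowerCentralSeries (n+1) → v ∈ (⊤ : Subgroup Γ).lowerCentralSeries (n+1) →
      p u → p v → p (u * v))
    (inv : ∀ u : Γ, u ∈ (⊤ : Subgroup Γ).lowerCentralSeries (n+1) → p u → p u⁻¹) :
    ∀ u ∈ (⊤ : Subgroup Γ).lowerCentralSeries (n+1), p u := by
  intro u hu
  rw [Subgroup.lowerCentralSeries_succ] at hu
  induction hu using closure_induction with
  | mem z hz =>
    obtain ⟨c, hc, y, -, rfl⟩ := hz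
    exact base c hc y
  | one => exact one
  | mul x y hx hy px py =>
    refine mul x y ?_ ?_ px py <;> rw [Subgroup.lowerCentralSeries_succ] <;> assumption
  | inv x hx px =>
    refine inv x ?_ px
    rw [Subgroup.lowerCentralSeries_succ]; exact hx

/-- squares of `γ₂` (index 1) lie in `γ₃` (index 2). -/
lemma sq_mem₁ (he : ∀ g : Γ, g^4 = 1) :
    ∀ x ∈ (⊤ : Subgroup Γ).lowerCentralSeries 1, x^2 ∈ (⊤ : Subgroup Γ).lowerCentralSeries 2 := by
  refine lcs_succ_induction ?_ ?_ ?_ ?_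
  · intro x _ y
    exact comm_sq_mem_two he x y
  · simpa using one_mem _
  · intro u v hu hv pu pv
    rw [idI5]
    refine mul_mem (mul_mem pu pv) (lcs_conj_mem' ?_ v)
    exact Subgroup.lowerCentralSeries_antitone _ (by norm_num) (comm_mem 1 1 (inv_mem hv) (inv_mem hu))
  · intro u _ pu
    rw [inv_pow]
    exact inv_mem pu

/-- squares of `γ₃` (index 2) lie in `γ₄` (index 3). -/
lemma sq_mem₂ (he : ∀ g : Γ, g^4 = 1) (hN : (⊤ : Subgroup Γ).lowerCentralSeries 5 = ⊥) :
    ∀ x ∈ (⊤ : Subgroup Γ).lowerCentralSeries 2, x^2 ∈ (⊤ : Subgroup Γ).lowerCentralSeries 3 := by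
  refine lcs_succ_induction ?_ ?_ ?_ ?_
  · intro x hx y
    rw [idI6 x y]
    have h1 : ⁅x^2, y⁆ ∈ (⊤ : Subgroup Γ).lowerCentralSeries 3 := mem_succ (sq_mem₁ he x hx) y
    have h2 : ⁅⁅x,y⁆⁻¹, x⁆ ∈ (⊤ : Subgroup Γ).lowerCentralSeries 3 :=
      Subgroup.lowerCentralSeries_antitone _ (by norm_num) (comm_mem 2 1 (inv_mem (mem_succ hx y)) hx)
    exact mul_mem h1 (lcs_conj_mem' (inv_mem h2) ⁅x,y⁆)
  · simpa using one_mem _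
  · intro u v hu hv pu pv
    rw [(commute_high hN (by norm_num) hu hv).mul_pow]
    exact mul_mem pu pv
  · intro u _ pu
    rw [inv_pow]
    exact inv_mem pu

/-- squares of `γ₄` (index 3) lie in `γ₅` (index 4). -/
lemma sq_mem₃ (he : ∀ g : Γ, g^4 = 1) (hN : (⊤ : Subgroup Γ).lowerCentralSeries 5 = ⊥) :
    ∀ x ∈ (⊤ : Subgroup Γ).lowerCentralSeries 3, x^2 ∈ (⊤ : Subgroup Γ).lowerCentralSeries 4 := by
  refine lcs_succ_induction ?_ ?_ ?_ ?_
  · intro x hx y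
    rw [idI6 x y]
    have h1 : ⁅x^2, y⁆ ∈ (⊤ : Subgroup Γ).lowerCentralSeries 4 := mem_succ (sq_mem₂ he hN x hx) y
    have h2 : ⁅⁅x,y⁆⁻¹, x⁆ ∈ (⊤ : Subgroup Γ).lowerCentralSeries 4 :=
      Subgroup.lowerCentralSeries_antitone _ (by norm_num) (comm_mem 3 2 (inv_mem (mem_succ hx y)) hx)
    exact mul_mem h1 (lcs_conj_mem' (inv_mem h2) ⁅x,y⁆)
  · simpa using one_mem _
  · intro u v hu hv pu pv
    rw [(commute_high hN (by norm_num) hu hv).mul_pow]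
    exact mul_mem pu pv
  · intro u _ pu
    rw [inv_pow]
    exact inv_mem pu

/-! ### The subgroup generated by `γ₂` and all squares -/

variable (Γ) in
def KK : Subgroup Γ :=
  closure (((⊤ : Subgroup Γ).lowerCentralSeries 1 : Set Γ) ∪ {x | ∃ t : Γ, t^2 = x})

lemma lcs1_le_KK : (⊤ : Subgroup Γ).lowerCentralSeries 1 ≤ KK Γ :=
  fun _ hx => subset_closure (Or.inl hx)

lemma sq_mem_KK (t : Γ) : t^2 ∈ KK Γ :=
  subset_closure (Or.inr ⟨t, rfl⟩)

instance KK_normal : (KK Γ).Normal := by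
  constructor
  intro n hn g
  have h : g*n*g⁻¹ = n * ⁅n⁻¹,g⁆ := by group
  rw [h]
  exact mul_mem hn (lcs1_le_KK (mem_l1 n⁻¹ g))

lemma KK_induction {p : Γ → Prop}
    (h1 : ∀ m ∈ (⊤ : Subgroup Γ).lowerCentralSeries 1, p m) (h2 : ∀ t : Γ, p (t^2)) (hone : p 1)
    (hmul : ∀ u v : Γ, u ∈ KK Γ → v ∈ KK Γ → p u → p v → p (u*v))
    (hinv : ∀ u : Γ, u ∈ KK Γ → p u → p u⁻¹) :
    ∀ m ∈ KK Γ, p m := by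
  intro m hm
  induction hm using closure_induction with
  | mem x hx => rcases hx with hx | ⟨t, rfl⟩
                · exact h1 x hx
                · exact h2 t
  | one => exact hone
  | mul x y hx hy px py => exact hmul x y hx hy px py
  | inv x hx px => exact hinv x hx px

/-- For any `g` and any `m ∈ KK`, `⁅g,m⁆² ∈ γ₄` (index 3). -/
lemma PK (he : ∀ g : Γ, g^4 = 1) (hN : (⊤ : Subgroup Γ).lowerCentralSeries 5 = ⊥) (g : Γ) :
    ∀ m ∈ KK Γ, ⁅g,m⁆^2 ∈ (⊤ : Subgroup Γ).lowerCentralSeries 3 := by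
  refine KK_induction ?_ ?_ ?_ ?_ ?_
  · intro m hm
    exact sq_mem₂ he hN _ (mem_succ' hm g)
  · intro t
    rw [idI7 g t]
    have hσ : ⁅g,t⁆^2 ∈ (⊤ : Subgroup Γ).lowerCentralSeries 2 := comm_sq_mem_two he g t
    have hρ : ⁅⁅g,t⁆⁻¹, t⁆ ∈ (⊤ : Subgroup Γ).lowerCentralSeries 2 := mem_succ (inv_mem (mem_l1 g t)) t
    rw [(commute_high hN (by norm_num) hσ hρ).mul_pow]
    exact mul_mem (sq_mem₂ he hN _ hσ) (sq_mem₂ he hN _ hρ)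
  · rw [comm_one_right]
    simpa using one_mem _
  · intro u v _ _ pu pv
    rw [idI2, idI5]
    refine mul_mem (mul_mem pu ?_) (lcs_conj_mem' ?_ _)
    · rw [conj_sq u ⁅g,v⁆]
      exact lcs_conj_mem pv u
    · exact comm_mem 1 1 (inv_mem (lcs_conj_mem (mem_l1 g v) u)) (inv_mem (mem_l1 g u))
  · intro u _ pu
    rw [idI4, conj_sq', inv_pow]
    exact lcs_conj_mem' (inv_mem pu) u

/-! ### The set of elements commuting with `s` modulo `γ₅` -/

lemma Zmul {s y₁ y₂ : Γ} (h₁ : ⁅s,y₁⁆ ∈ (⊤ : Subgroup Γ).lowerCentralSeries 4)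
    (h₂ : ⁅s,y₂⁆ ∈ (⊤ : Subgroup Γ).lowerCentralSeries 4) : ⁅s,y₁*y₂⁆ ∈ (⊤ : Subgroup Γ).lowerCentralSeries 4 := by
  rw [idI2]
  exact mul_mem h₁ (lcs_conj_mem h₂ y₁)

lemma Zinv {s y : Γ} (h : ⁅s,y⁆ ∈ (⊤ : Subgroup Γ).lowerCentralSeries 4) :
    ⁅s,y⁻¹⁆ ∈ (⊤ : Subgroup Γ).lowerCentralSeries 4 := by
  rw [idI4]
  exact lcs_conj_mem' (inv_mem h) y

lemma ZK (he : ∀ g : Γ, g^4 = 1) (hN : (⊤ : Subgroup Γ).lowerCentralSeries 5 = ⊥) {s : Γ}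
    (hs2 : s ∈ (⊤ : Subgroup Γ).lowerCentralSeries 2) :
    ∀ m ∈ KK Γ, ⁅s,m⁆ ∈ (⊤ : Subgroup Γ).lowerCentralSeries 4 := by
  refine KK_induction ?_ ?_ ?_ ?_ ?_
  · intro m hm
    exact comm_mem 2 1 hs2 hm
  · intro t
    rw [idI7]
    have hr : ⁅s,t⁆ ∈ (⊤ : Subgroup Γ).lowerCentralSeries 3 := mem_succ hs2 t
    exact mul_mem (sq_mem₃ he hN _ hr) (mem_succ (inv_mem hr) t)
  · rw [comm_one_right]
    exact one_mem _
  · intro u v _ _ pu pv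
    exact Zmul pu pv
  · intro u _ pu
    exact Zinv pu


/-! ### The key lemma: `⁅⁅g,h⁆², y⁆ ∈ γ₅` for all `g h y` -/

lemma bigBase (he : ∀ g : Γ, g^4 = 1) (hN : (⊤ : Subgroup Γ).lowerCentralSeries 5 = ⊥)
    (hs : ∀ g h : Γ, ⁅⁅g,h⁆^2, g⁆ = 1)
    {A B : Γ} (hAB : closure ({A,B} : Set Γ) = ⊤) (g h y : Γ) :
    ⁅⁅g,h⁆^2, y⁆ ∈ (⊤ : Subgroup Γ).lowerCentralSeries 4 := by
  -- quotient modulo KK is elementary abelian generated by A, B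
  have hQsq : ∀ q : Γ ⧸ KK Γ, q * q = 1 := by
    intro q
    obtain ⟨t, rfl⟩ := QuotientGroup.mk_surjective q
    rw [← QuotientGroup.mk_mul]
    exact (QuotientGroup.eq_one_iff _).mpr (by rw [← pow_two]; exact sq_mem_KK t)
  have hQcomm : ∀ q r : Γ ⧸ KK Γ, q*r = r*q := by
    intro q r
    obtain ⟨x, rfl⟩ := QuotientGroup.mk_surjective q
    obtain ⟨z, rfl⟩ := QuotientGroup.mk_surjective r
    rw [← QuotientGroup.mk_mul, ← QuotientGroup.mk_mul]
    refine QuotientGroup.eq.mpr ?_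
    have hid : (x*z)⁻¹*(z*x) = ⁅z⁻¹,x⁻¹⁆ := by group
    rw [hid]
    exact lcs1_le_KK (mem_l1 z⁻¹ x⁻¹)
  have hfour : ∀ x : Γ, (x : Γ ⧸ KK Γ) = 1 ∨ (x : Γ ⧸ KK Γ) = A ∨ (x : Γ ⧸ KK Γ) = B ∨
      (x : Γ ⧸ KK Γ) = (A : Γ ⧸ KK Γ) * B := by
    intro x
    have hx : x ∈ closure ({A,B} : Set Γ) := hAB ▸ mem_top x
    induction hx using closure_induction with
    | mem z hz =>
      rcases hz with rfl | rfl
      · exact Or.inr (Or.inl rfl)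
      · exact Or.inr (Or.inr (Or.inl rfl))
    | one => exact Or.inl (by simp)
    | mul x z hx hz px pz =>
      have hA2 : (A : Γ ⧸ KK Γ)*(A : Γ ⧸ KK Γ) = 1 := hQsq _
      have hB2 : (B : Γ ⧸ KK Γ)*(B : Γ ⧸ KK Γ) = 1 := hQsq _
      have nAA : ∀ t : Γ ⧸ KK Γ, (A : Γ ⧸ KK Γ)*((A : Γ ⧸ KK Γ)*t) = t := fun t => by
        rw [← mul_assoc, hA2, one_mul]
      have nBB : ∀ t : Γ ⧸ KK Γ, (B : Γ ⧸ KK Γ)*((B : Γ ⧸ KK Γ)*t) = t := fun t => by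
        rw [← mul_assoc, hB2, one_mul]
      have nBA : (B : Γ ⧸ KK Γ)*(A : Γ ⧸ KK Γ) = (A : Γ ⧸ KK Γ)*(B : Γ ⧸ KK Γ) := hQcomm _ _
      have nBAt : ∀ t : Γ ⧸ KK Γ, (B : Γ ⧸ KK Γ)*((A : Γ ⧸ KK Γ)*t) =
          (A : Γ ⧸ KK Γ)*((B : Γ ⧸ KK Γ)*t) := fun t => by
        rw [← mul_assoc, nBA, mul_assoc]
      rcases px with h1|h1|h1|h1 <;> rcases pz with h2|h2|h2|h2 <;>
        rw [QuotientGroup.mk_mul, h1, h2] <;>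
        simp only [one_mul, mul_one, mul_assoc, nAA, nBB, nBA, nBAt, hA2, hB2] <;>
        tauto
    | inv x hx px =>
      have hxx : ((x⁻¹ : Γ) : Γ ⧸ KK Γ) = (x : Γ ⧸ KK Γ) := by
        rw [QuotientGroup.mk_inv]
        exact inv_eq_of_mul_eq_one_right (hQsq _)
      rw [hxx]
      exact px
  have hdec : ∀ x : Γ, ∃ w m : Γ, (w = 1 ∨ w = A ∨ w = B ∨ w = A*B) ∧ m ∈ KK Γ ∧ x = w*m := by
    intro x
    have hget : ∀ w : Γ, (x : Γ ⧸ KK Γ) = (w : Γ ⧸ KK Γ) → ∃ m, m ∈ KK Γ ∧ x = w*m := by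
      intro w hw
      refine ⟨w⁻¹*x, QuotientGroup.eq.mp hw.symm, by group⟩
    rcases hfour x with hc|hc|hc|hc
    · exact ⟨1, x, Or.inl rfl, (QuotientGroup.eq_one_iff _).mp hc, by rw [one_mul]⟩
    · obtain ⟨m, hm, hx⟩ := hget A hc
      exact ⟨A, m, Or.inr (Or.inl rfl), hm, hx⟩
    · obtain ⟨m, hm, hx⟩ := hget B hc
      exact ⟨B, m, Or.inr (Or.inr (Or.inl rfl)), hm, hx⟩
    · rw [← QuotientGroup.mk_mul] at hc
      obtain ⟨m, hm, hx⟩ := hget (A*B) hc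
      exact ⟨A*B, m, Or.inr (Or.inr (Or.inr rfl)), hm, hx⟩
  -- basic facts about s = ⁅g,h⁆²
  have hs2 : ⁅g,h⁆^2 ∈ (⊤ : Subgroup Γ).lowerCentralSeries 2 := comm_sq_mem_two he g h
  have hZg : ⁅⁅g,h⁆^2, g⁆ ∈ (⊤ : Subgroup Γ).lowerCentralSeries 4 := by
    rw [hs g h]; exact one_mem _
  have hflip : ⁅g,h⁆^2 = (⁅h,g⁆^2)⁻¹ := by
    rw [← commutatorElement_inv h g, inv_pow]
  have hZh : ⁅⁅g,h⁆^2, h⁆ ∈ (⊤ : Subgroup Γ).lowerCentralSeries 4 := by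
    rw [hflip, idI3, hs h g]
    simpa using one_mem _
  have hZK : ∀ m ∈ KK Γ, ⁅⁅g,h⁆^2, m⁆ ∈ (⊤ : Subgroup Γ).lowerCentralSeries 4 := ZK he hN hs2
  -- spanning case
  have hspan : ⁅⁅g,h⁆^2, A⁆ ∈ (⊤ : Subgroup Γ).lowerCentralSeries 4 →
      ⁅⁅g,h⁆^2, B⁆ ∈ (⊤ : Subgroup Γ).lowerCentralSeries 4 → ⁅⁅g,h⁆^2, y⁆ ∈ (⊤ : Subgroup Γ).lowerCentralSeries 4 := by
    intro hA hB
    have hy : y ∈ closure ({A,B} : Set Γ) := hAB ▸ mem_top y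
    induction hy using closure_induction with
    | mem z hz => rcases hz with rfl | rfl
                  · exact hA
                  · exact hB
    | one => rw [comm_one_right]; exact one_mem _
    | mul z w _ _ pz pw => exact Zmul pz pw
    | inv z _ pz => exact Zinv pz
  -- degenerate cases
  have hdegK : ∀ g' m : Γ, m ∈ KK Γ → ⁅g',m⁆^2 ∈ (⊤ : Subgroup Γ).lowerCentralSeries 3 :=
    fun g' m hm => PK he hN g' m hm
  have hdeg1 : h ∈ KK Γ → ⁅⁅g,h⁆^2,y⁆ ∈ (⊤ : Subgroup Γ).lowerCentralSeries 4 :=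
    fun hh => mem_succ (hdegK g h hh) y
  have hdeg2 : g ∈ KK Γ → ⁅⁅g,h⁆^2,y⁆ ∈ (⊤ : Subgroup Γ).lowerCentralSeries 4 := by
    intro hg
    rw [hflip]
    exact mem_succ (inv_mem (hdegK h g hg)) y
  have hdeg3 : (∃ m, m ∈ KK Γ ∧ h = g*m) → ⁅⁅g,h⁆^2,y⁆ ∈ (⊤ : Subgroup Γ).lowerCentralSeries 4 := by
    rintro ⟨m, hm, hhm⟩
    rw [hhm, show ⁅g, g*m⁆ = g*⁅g,m⁆*g⁻¹ from by group, conj_sq]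
    exact mem_succ (lcs_conj_mem (hdegK g m hm) g) y
  -- the sixteen cases
  obtain ⟨w1, m1, hw1, hm1, hg1⟩ := hdec g
  obtain ⟨w2, m2, hw2, hm2, hh2⟩ := hdec h
  rcases hw1 with h1x|h1x|h1x|h1x <;> rcases hw2 with h2x|h2x|h2x|h2x <;>
    rw [h1x] at hg1 <;> rw [h2x] at hh2 <;> clear h1x h2x
  -- w1 = 1 : g ∈ KK
  · exact hdeg2 (by rw [hg1, one_mul]; exact hm1)
  · exact hdeg2 (by rw [hg1, one_mul]; exact hm1)
  · exact hdeg2 (by rw [hg1, one_mul]; exact hm1)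
  · exact hdeg2 (by rw [hg1, one_mul]; exact hm1)
  -- w1 = A
  · exact hdeg1 (by rw [hh2, one_mul]; exact hm2)
  · -- (A, A) : h = g * (m1⁻¹ * m2)
    exact hdeg3 ⟨m1⁻¹*m2, mul_mem (inv_mem hm1) hm2, by rw [hg1, hh2]; group⟩
  · -- (A, B) : spanning, A = g*m1⁻¹, B = h*m2⁻¹
    refine hspan ?_ ?_
    · rw [show A = g*m1⁻¹ from by rw [hg1]; group]
      exact Zmul hZg (hZK _ (inv_mem hm1))
    · rw [show B = h*m2⁻¹ from by rw [hh2]; group]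
      exact Zmul hZh (hZK _ (inv_mem hm2))
  · -- (A, A*B) : A = g*m1⁻¹, B = m1*(g⁻¹*(h*m2⁻¹))
    refine hspan ?_ ?_
    · rw [show A = g*m1⁻¹ from by rw [hg1]; group]
      exact Zmul hZg (hZK _ (inv_mem hm1))
    · rw [show B = m1*(g⁻¹*(h*m2⁻¹)) from by rw [hg1, hh2]; group]
      exact Zmul (hZK _ hm1) (Zmul (Zinv hZg) (Zmul hZh (hZK _ (inv_mem hm2))))
  -- w1 = B
  · exact hdeg1 (by rw [hh2, one_mul]; exact hm2)
  · -- (B, A) : spanning, A = h*m2⁻¹, B = g*m1⁻¹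
    refine hspan ?_ ?_
    · rw [show A = h*m2⁻¹ from by rw [hh2]; group]
      exact Zmul hZh (hZK _ (inv_mem hm2))
    · rw [show B = g*m1⁻¹ from by rw [hg1]; group]
      exact Zmul hZg (hZK _ (inv_mem hm1))
  · -- (B, B) : h = g * (m1⁻¹ * m2)
    exact hdeg3 ⟨m1⁻¹*m2, mul_mem (inv_mem hm1) hm2, by rw [hg1, hh2]; group⟩
  · -- (B, A*B) : B = g*m1⁻¹, A = h*(m2⁻¹*(m1*g⁻¹))
    refine hspan ?_ ?_
    · rw [show A = h*(m2⁻¹*(m1*g⁻¹)) from by rw [hg1, hh2]; group]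
      exact Zmul hZh (Zmul (hZK _ (inv_mem hm2)) (Zmul (hZK _ hm1) (Zinv hZg)))
    · rw [show B = g*m1⁻¹ from by rw [hg1]; group]
      exact Zmul hZg (hZK _ (inv_mem hm1))
  -- w1 = A*B
  · exact hdeg1 (by rw [hh2, one_mul]; exact hm2)
  · -- (A*B, A) : A = h*m2⁻¹, B = m2*(h⁻¹*(g*m1⁻¹))
    refine hspan ?_ ?_
    · rw [show A = h*m2⁻¹ from by rw [hh2]; group]
      exact Zmul hZh (hZK _ (inv_mem hm2))
    · rw [show B = m2*(h⁻¹*(g*m1⁻¹)) from by rw [hg1, hh2]; group]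
      exact Zmul (hZK _ hm2) (Zmul (Zinv hZh) (Zmul hZg (hZK _ (inv_mem hm1))))
  · -- (A*B, B) : B = h*m2⁻¹, A = g*(m1⁻¹*(m2*h⁻¹))
    refine hspan ?_ ?_
    · rw [show A = g*(m1⁻¹*(m2*h⁻¹)) from by rw [hg1, hh2]; group]
      exact Zmul hZg (Zmul (hZK _ (inv_mem hm1)) (Zmul (hZK _ hm2) (Zinv hZh)))
    · rw [show B = h*m2⁻¹ from by rw [hh2]; group]
      exact Zmul hZh (hZK _ (inv_mem hm2))
  · -- (A*B, A*B) : h = g * (m1⁻¹ * m2)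
    exact hdeg3 ⟨m1⁻¹*m2, mul_mem (inv_mem hm1) hm2, by rw [hg1, hh2]; group⟩


/-- For all `x ∈ γ₂` (index 1) and all `y`: `⁅x²,y⁆ ∈ γ₅` (index 4). -/
lemma hash (he : ∀ g : Γ, g^4 = 1) (hN : (⊤ : Subgroup Γ).lowerCentralSeries 5 = ⊥)
    (hs : ∀ g h : Γ, ⁅⁅g,h⁆^2, g⁆ = 1) {A B : Γ} (hAB : closure ({A,B} : Set Γ) = ⊤) :
    ∀ x ∈ (⊤ : Subgroup Γ).lowerCentralSeries 1, ∀ y : Γ, ⁅x^2, y⁆ ∈ (⊤ : Subgroup Γ).lowerCentralSeries 4 := by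
  refine lcs_succ_induction ?_ ?_ ?_ ?_
  · intro x _ y w
    exact bigBase he hN hs hAB x y w
  · intro w
    rw [one_pow, comm_one_left]
    exact one_mem _
  · intro u v hu hv pu pv w
    rw [idI5]
    have hγ : v⁻¹*⁅v⁻¹,u⁻¹⁆*v ∈ (⊤ : Subgroup Γ).lowerCentralSeries 3 :=
      lcs_conj_mem' (comm_mem 1 1 (inv_mem hv) (inv_mem hu)) v
    rw [idI1]
    refine mul_mem (lcs_conj_mem (mem_succ hγ w) _) ?_
    rw [idI1]
    exact mul_mem (lcs_conj_mem (pv w) _) (pu w)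
  · intro u _ pu w
    rw [inv_pow, idI3]
    exact lcs_conj_mem' (inv_mem (pu w)) _

/-- squares of `γ₃` (index 2) lie in `γ₅` (index 4). -/
lemma sq_mem_four (he : ∀ g : Γ, g^4 = 1) (hN : (⊤ : Subgroup Γ).lowerCentralSeries 5 = ⊥)
    (hs : ∀ g h : Γ, ⁅⁅g,h⁆^2, g⁆ = 1) {A B : Γ} (hAB : closure ({A,B} : Set Γ) = ⊤) :
    ∀ u ∈ (⊤ : Subgroup Γ).lowerCentralSeries 2, u^2 ∈ (⊤ : Subgroup Γ).lowerCentralSeries 4 := by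
  refine lcs_succ_induction ?_ ?_ ?_ ?_
  · intro x hx y
    rw [idI6]
    refine mul_mem (hash he hN hs hAB x hx y) (lcs_conj_mem' ?_ _)
    exact inv_mem (comm_mem 2 1 (inv_mem (mem_succ hx y)) hx)
  · simpa using one_mem _
  · intro u v hu hv pu pv
    rw [(commute_high hN (by norm_num) hu hv).mul_pow]
    exact mul_mem pu pv
  · intro u _ pu
    rw [inv_pow]
    exact inv_mem pu

/-- Main result: every element of `γ₄` (index 3) has square 1. -/
theorem lcs3_sq_eq_one (he : ∀ g : Γ, g^4 = 1) (hN : (⊤ : Subgroup Γ).lowerCentralSeries 5 = ⊥)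
    (hs : ∀ g h : Γ, ⁅⁅g,h⁆^2, g⁆ = 1) {A B : Γ} (hAB : closure ({A,B} : Set Γ) = ⊤) :
    ∀ v ∈ (⊤ : Subgroup Γ).lowerCentralSeries 3, v^2 = 1 := by
  refine lcs_succ_induction ?_ ?_ ?_ ?_
  · intro u hu y
    have hd : ⁅⁅u,y⁆⁻¹, u⁆ = 1 :=
      eq_one_of_high hN (by norm_num) (comm_mem 3 2 (inv_mem (mem_succ hu y)) hu)
    have h2 : ⁅u^2, y⁆ = 1 :=
      eq_one_of_high hN (by norm_num) (mem_succ (sq_mem_four he hN hs hAB u hu) y)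
    rw [idI6, hd, h2]
    group
  · exact one_pow 2
  · intro u v hu hv pu pv
    rw [(commute_high hN (by norm_num) hu hv).mul_pow, pu, pv, one_mul]
  · intro u _ pu
    rw [inv_pow, pu, inv_one]

end ExpFourAux

/-- if `G` has exponent 4, every 2-generated subgroup is
nilpotent of class ≤ 5, and `[[a,b]^2,a] = 1` always holds, then
`[a,b,a,a]^2 = [a,b,a,b]^2 = 1`, and consequently `γ₄(⟨a,b⟩)^2 = 1`. -/
theorem exponent_four_gamma4_squared {G : Type*} [Group G]
    (hexp : ∀ g : G, g ^ 4 = 1)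
    (h2gen : ∀ a b : G,
      (⊤ : Subgroup ↥(Subgroup.closure ({a, b} : Set G))).lowerCentralSeries 5 = ⊥)
    (hsq : ∀ a b : G, pcomm ((pcomm a b) ^ 2) a = 1) :
    ∀ a b : G,
      (pcomm (pcomm (pcomm a b) a) a) ^ 2 = 1 ∧
      (pcomm (pcomm (pcomm a b) a) b) ^ 2 = 1 ∧
      ∀ g ∈ ((⊤ : Subgroup ↥(Subgroup.closure ({a, b} : Set G))).lowerCentralSeries 3).map
          (Subgroup.closure ({a, b} : Set G)).subtype, g ^ 2 = 1 := by
  intro a b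
  have ha : a ∈ Subgroup.closure ({a,b} : Set G) := Subgroup.subset_closure (by simp)
  have hb : b ∈ Subgroup.closure ({a,b} : Set G) := Subgroup.subset_closure (by simp)
  set H : Subgroup G := Subgroup.closure ({a,b} : Set G) with hHdef
  set A : ↥H := ⟨a, ha⟩ with hAdef
  set B : ↥H := ⟨b, hb⟩ with hBdef
  have heH : ∀ g : ↥H, g^4 = 1 := fun g => Subtype.ext (by push_cast; exact hexp ↑g)
  have hNH : (⊤ : Subgroup ↥H).lowerCentralSeries 5 = ⊥ := h2gen a b
  have hsG : ∀ x y : G, ⁅⁅x,y⁆^2, x⁆ = 1 := by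
    intro x y
    have h1 := hsq x⁻¹ y⁻¹
    rw [show pcomm x⁻¹ y⁻¹ = ⁅x,y⁆ from by simp [pcomm, commutatorElement_def]] at h1
    simp only [pcomm, inv_inv] at h1
    exact ExpFourAux.comm_eq_one_of_pc h1
  have hsH : ∀ g h : ↥H, ⁅⁅g,h⁆^2, g⁆ = 1 := by
    intro g h
    have hG := hsG (g : G) (h : G)
    apply Subtype.ext
    simpa [commutatorElement_def, pow_two] using hG
  have hpre : (((↑) : ↥H → G) ⁻¹' ({a,b} : Set G)) = ({A,B} : Set ↥H) := by
    ext x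
    simp [Set.mem_preimage, Subtype.ext_iff, hAdef, hBdef]
  have hABtop : Subgroup.closure ({A, B} : Set ↥H) = ⊤ := by
    rw [← hpre]
    exact Subgroup.closure_closure_coe_preimage
  have master := ExpFourAux.lcs3_sq_eq_one heH hNH hsH hABtop
  have pc_eq : ∀ x y : ↥H, pcomm x y = ⁅x⁻¹, y⁻¹⁆ := fun x y => by
    simp [pcomm, commutatorElement_def]
  have m1 : pcomm A B ∈ (⊤ : Subgroup ↥H).lowerCentralSeries 1 := by
    rw [pc_eq]; exact ExpFourAux.mem_l1 _ _
  have m2 : pcomm (pcomm A B) A ∈ (⊤ : Subgroup ↥H).lowerCentralSeries 2 := by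
    rw [pc_eq]; exact ExpFourAux.mem_succ (inv_mem m1) _
  have m3a : pcomm (pcomm (pcomm A B) A) A ∈ (⊤ : Subgroup ↥H).lowerCentralSeries 3 := by
    rw [pc_eq]; exact ExpFourAux.mem_succ (inv_mem m2) _
  have m3b : pcomm (pcomm (pcomm A B) A) B ∈ (⊤ : Subgroup ↥H).lowerCentralSeries 3 := by
    rw [pc_eq]; exact ExpFourAux.mem_succ (inv_mem m2) _
  have hca : ((pcomm (pcomm (pcomm A B) A) A : ↥H) : G) = pcomm (pcomm (pcomm a b) a) a := by
    simp only [pcomm, hAdef, hBdef]; push_cast; rfl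
  have hcb : ((pcomm (pcomm (pcomm A B) A) B : ↥H) : G) = pcomm (pcomm (pcomm a b) a) b := by
    simp only [pcomm, hAdef, hBdef]; push_cast; rfl
  refine ⟨?_, ?_, ?_⟩
  · have h2 := master _ m3a
    have h3 := congrArg (Subtype.val) h2
    push_cast at h3
    rw [← hca]
    exact h3
  · have h2 := master _ m3b
    have h3 := congrArg (Subtype.val) h2
    push_cast at h3
    rw [← hcb]
    exact h3
  · intro g hg
    rw [Subgroup.mem_map] at hg
    obtain ⟨v, hv, rfl⟩ := hg
    have h2 := master v hv
    rw [← map_pow, h2, map_one]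
end

section
/- Let G be a group of nilpotency class ≤ 5 and suppose e > 2 and g^{2^e} = 1 for all g ∈ G, γ₄(G)^{2^{e-1}} = 1, and γ₃(G)^{2^e} = 1. Then for all x, y ∈ G: [x,y]^{2^e} = ([x,y,x,x,y]·[x,y,y,y,x])^{C(2^e,4)}. -/
open scoped commutatorElement

section Infra
variable {G : Type*} [Group G]

theorem pcomm_eq (a b : G) : pcomm a b = ⁅a⁻¹, b⁻¹⁆ := by
  simp [pcomm, commutatorElement_def, mul_assoc]

theorem pcomm_one_right (a : G) : pcomm a 1 = 1 := by simp [pcomm]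

theorem pcomm_mul_right (a b c : G) :
    pcomm a (b * c) = pcomm a c * pcomm a b * pcomm (pcomm a b) c := by
  simp only [pcomm]; group

theorem pcomm_mul_left (a b w : G) :
    pcomm (a * b) w = pcomm a w * pcomm (pcomm a w) b * pcomm b w := by
  simp only [pcomm]; group

theorem mul_comm_pcomm (a b : G) : a * b = b * a * pcomm a b := by
  simp only [pcomm]; group

theorem pcomm_inv_left (a b : G) : pcomm a⁻¹ b = a * (pcomm a b)⁻¹ * a⁻¹ := by
  simp only [pcomm]; group

theorem pcomm_swap (a b : G) : pcomm b a = (pcomm a b)⁻¹ := by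
  simp only [pcomm]; group

theorem lcs_succ (n : ℕ) :
    (⊤ : Subgroup G).lowerCentralSeries (n + 1) = ⁅(⊤ : Subgroup G).lowerCentralSeries n, (⊤ : Subgroup G)⁆ := rfl

/-- Three subgroups lemma, relative version. -/
theorem comm_comm_le_of_rotate {H₁ H₂ H₃ N : Subgroup G} [hN : N.Normal]
    (h1 : ⁅⁅H₂, H₃⁆, H₁⁆ ≤ N) (h2 : ⁅⁅H₃, H₁⁆, H₂⁆ ≤ N) : ⁅⁅H₁, H₂⁆, H₃⁆ ≤ N := by
  let f := QuotientGroup.mk' N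
  have key : ∀ {H : Subgroup G}, H ≤ N ↔ Subgroup.map f H = ⊥ := by
    intro H
    rw [Subgroup.map_eq_bot_iff, QuotientGroup.ker_mk']
  rw [key, Subgroup.map_commutator, Subgroup.map_commutator]
  rw [key, Subgroup.map_commutator, Subgroup.map_commutator] at h1 h2
  exact Subgroup.commutator_commutator_eq_bot_of_rotate h1 h2

theorem lcs_comm_le : ∀ (j i : ℕ),
    ⁅(⊤ : Subgroup G).lowerCentralSeries i, (⊤ : Subgroup G).lowerCentralSeries j⁆ ≤ (⊤ : Subgroup G).lowerCentralSeries (i + j + 1)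
  | 0, i => by
    rw [Nat.add_zero]
    exact le_of_eq (lcs_succ i).symm
  | (j + 1), i => by
    have e1 : (⊤ : Subgroup G).lowerCentralSeries (j+1) = ⁅(⊤ : Subgroup G).lowerCentralSeries j, (⊤ : Subgroup G)⁆ :=
      lcs_succ j
    have h1 : ⁅⁅(⊤ : Subgroup G), (⊤ : Subgroup G).lowerCentralSeries i⁆, (⊤ : Subgroup G).lowerCentralSeries j⁆ ≤
        (⊤ : Subgroup G).lowerCentralSeries (i + (j + 1) + 1) := by
      rw [Subgroup.commutator_comm (⊤ : Subgroup G) ((⊤ : Subgroup G).lowerCentralSeries i)]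
      calc ⁅⁅(⊤ : Subgroup G).lowerCentralSeries i, (⊤ : Subgroup G)⁆, (⊤ : Subgroup G).lowerCentralSeries j⁆
          = ⁅(⊤ : Subgroup G).lowerCentralSeries (i+1), (⊤ : Subgroup G).lowerCentralSeries j⁆ := by
            rw [lcs_succ i]
        _ ≤ (⊤ : Subgroup G).lowerCentralSeries (i + 1 + j + 1) := lcs_comm_le j (i + 1)
        _ ≤ (⊤ : Subgroup G).lowerCentralSeries (i + (j + 1) + 1) := by
            apply Subgroup.lowerCentralSeries_antitone _; omega
    have h2 : ⁅⁅(⊤ : Subgroup G).lowerCentralSeries i, (⊤ : Subgroup G).lowerCentralSeries j⁆, (⊤ : Subgroup G)⁆ ≤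
        (⊤ : Subgroup G).lowerCentralSeries (i + (j + 1) + 1) := by
      calc ⁅⁅(⊤ : Subgroup G).lowerCentralSeries i, (⊤ : Subgroup G).lowerCentralSeries j⁆, (⊤ : Subgroup G)⁆
          ≤ ⁅(⊤ : Subgroup G).lowerCentralSeries (i + j + 1), (⊤ : Subgroup G)⁆ :=
            Subgroup.commutator_mono (lcs_comm_le j i) le_rfl
        _ = (⊤ : Subgroup G).lowerCentralSeries (i + j + 2) := (lcs_succ (i+j+1)).symm
        _ ≤ (⊤ : Subgroup G).lowerCentralSeries (i + (j + 1) + 1) := by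
            apply Subgroup.lowerCentralSeries_antitone _; omega
    calc ⁅(⊤ : Subgroup G).lowerCentralSeries i, (⊤ : Subgroup G).lowerCentralSeries (j+1)⁆
        = ⁅⁅(⊤ : Subgroup G).lowerCentralSeries j, (⊤ : Subgroup G)⁆, (⊤ : Subgroup G).lowerCentralSeries i⁆ := by
          rw [← e1, Subgroup.commutator_comm]
      _ ≤ (⊤ : Subgroup G).lowerCentralSeries (i + (j + 1) + 1) := comm_comm_le_of_rotate h1 h2

theorem pcomm_mem {i j : ℕ} {a b : G} (ha : a ∈ (⊤ : Subgroup G).lowerCentralSeries i)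
    (hb : b ∈ (⊤ : Subgroup G).lowerCentralSeries j) : pcomm a b ∈ (⊤ : Subgroup G).lowerCentralSeries (i + j + 1) := by
  rw [pcomm_eq]
  exact lcs_comm_le j i
    (Subgroup.commutator_mem_commutator (inv_mem ha) (inv_mem hb))

end Infra
section Class5
variable {G : Type*} [Group G]

theorem mem_lcs_zero (a : G) : a ∈ (⊤ : Subgroup G).lowerCentralSeries 0 := by
  simp [lowerCentralSeries_zero]

theorem pcomm_mem_of_le {i j k : ℕ} {a b : G} (ha : a ∈ (⊤ : Subgroup G).lowerCentralSeries i)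
    (hb : b ∈ (⊤ : Subgroup G).lowerCentralSeries j) (h : k ≤ i + j + 1) :
    pcomm a b ∈ (⊤ : Subgroup G).lowerCentralSeries k :=
  Subgroup.lowerCentralSeries_antitone _ h (pcomm_mem ha hb)

variable (h5 : (⊤ : Subgroup G).lowerCentralSeries 5 = ⊥)
include h5

theorem ptriv {i j : ℕ} {a b : G} (ha : a ∈ (⊤ : Subgroup G).lowerCentralSeries i)
    (hb : b ∈ (⊤ : Subgroup G).lowerCentralSeries j) (hij : 4 ≤ i + j) : pcomm a b = 1 := by
  have : pcomm a b ∈ (⊤ : Subgroup G).lowerCentralSeries 5 :=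
    pcomm_mem_of_le ha hb (by omega)
  rw [h5, Subgroup.mem_bot] at this
  exact this

theorem pcommute {i j : ℕ} {a b : G} (ha : a ∈ (⊤ : Subgroup G).lowerCentralSeries i)
    (hb : b ∈ (⊤ : Subgroup G).lowerCentralSeries j) (hij : 4 ≤ i + j) : Commute a b := by
  have h := ptriv h5 ha hb hij
  have := mul_comm_pcomm a b
  rw [h, mul_one] at this
  exact this

/-- elements of `γ₅ = LCS 4` are central -/
theorem pcentral {a : G} (ha : a ∈ (⊤ : Subgroup G).lowerCentralSeries 4) (b : G) : Commute a b :=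
  pcommute h5 ha (mem_lcs_zero b) (by omega)

theorem pcomm_central {a : G} (ha : a ∈ (⊤ : Subgroup G).lowerCentralSeries 4) (b : G) : pcomm a b = 1 :=
  ptriv h5 ha (mem_lcs_zero b) (by omega)

theorem pcomm_central' {a : G} (ha : a ∈ (⊤ : Subgroup G).lowerCentralSeries 4) (b : G) : pcomm b a = 1 :=
  ptriv h5 (mem_lcs_zero b) ha (by omega)

/-- L0 : expansion for `γ₄` elements -/
theorem L0 {w : G} (hw : w ∈ (⊤ : Subgroup G).lowerCentralSeries 3) (h : G) :
    ∀ i : ℕ, pcomm w (h ^ i) = (pcomm w h) ^ i := by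
  intro i
  induction i with
  | zero => simp [pcomm_one_right]
  | succ i ih =>
      rw [pow_succ', pcomm_mul_right, ih,
        pcomm_central h5 (pcomm_mem_of_le hw (mem_lcs_zero h) (by omega)) (h ^ i), mul_one,
        ← pow_succ]

/-- L1 : expansion for `γ₃` elements -/
theorem L1 {v : G} (hv : v ∈ (⊤ : Subgroup G).lowerCentralSeries 2) (h : G) :
    ∀ i : ℕ, pcomm v (h ^ i) =
      (pcomm v h) ^ i * (pcomm (pcomm v h) h) ^ (i.choose 2) := by
  have hq : pcomm v h ∈ (⊤ : Subgroup G).lowerCentralSeries 3 := pcomm_mem_of_le hv (mem_lcs_zero h) (by omega)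
  have hr : pcomm (pcomm v h) h ∈ (⊤ : Subgroup G).lowerCentralSeries 4 :=
    pcomm_mem_of_le hq (mem_lcs_zero h) (by omega)
  intro i
  induction i with
  | zero => simp [pcomm_one_right]
  | succ i ih =>
      rw [pow_succ', pcomm_mul_right, ih, L0 h5 hq]
      calc (pcomm v h) ^ i * (pcomm (pcomm v h) h) ^ i.choose 2 * pcomm v h *
            (pcomm (pcomm v h) h) ^ i
          = (pcomm v h) ^ i * pcomm v h * ((pcomm (pcomm v h) h) ^ i.choose 2 *
            (pcomm (pcomm v h) h) ^ i) := by
            have := (pcentral h5 hr (pcomm v h)).pow_left (i.choose 2)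
            rw [mul_assoc ((pcomm v h) ^ i), this.eq]
            group
        _ = (pcomm v h) ^ (i+1) * (pcomm (pcomm v h) h) ^ ((i+1).choose 2) := by
            have h2 : (i+1).choose 2 = i.choose 2 + i := by
              rw [Nat.choose_succ_succ, Nat.choose_one_right]; exact Nat.add_comm _ _
            rw [← pow_succ, ← pow_add, h2]

end Class5
section Shuffle
variable {G : Type*} [Group G]

theorem mul_left_swap {a b : G} (h : Commute a b) (t : G) : a * (b * t) = b * (a * t) := by
  rw [← mul_assoc, h.eq, mul_assoc]

theorem shuffle3 {q r s : G} (hrq : Commute r q) (hsq : Commute s q) (hsr : Commute s r)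
    (i a b a' b' : ℕ) :
    q ^ i * (r ^ a * s ^ b) * q * (r ^ a' * s ^ b') =
      q ^ (i + 1) * (r ^ (a + a') * s ^ (b + b')) := by
  rw [pow_succ, pow_add, pow_add]
  simp only [mul_assoc]
  rw [mul_left_swap (hsq.pow_left b), mul_left_swap (hrq.pow_left a),
    mul_left_swap (hsr.pow_pow b a')]

end Shuffle

section L2sec
variable {G : Type*} [Group G] (h5 : (⊤ : Subgroup G).lowerCentralSeries 5 = ⊥)
include h5

theorem L2 {c : G} (hc : c ∈ (⊤ : Subgroup G).lowerCentralSeries 1) (h : G) :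
    ∀ i : ℕ, pcomm c (h ^ i) =
      (pcomm c h) ^ i * ((pcomm (pcomm c h) h) ^ (i.choose 2) *
        (pcomm (pcomm (pcomm c h) h) h) ^ (i.choose 3)) := by
  set q := pcomm c h with hqdef
  set r := pcomm q h with hrdef
  set s := pcomm r h with hsdef
  have hq : q ∈ (⊤ : Subgroup G).lowerCentralSeries 2 := pcomm_mem_of_le hc (mem_lcs_zero h) (by omega)
  have hr : r ∈ (⊤ : Subgroup G).lowerCentralSeries 3 := pcomm_mem_of_le hq (mem_lcs_zero h) (by omega)
  have hs : s ∈ (⊤ : Subgroup G).lowerCentralSeries 4 := pcomm_mem_of_le hr (mem_lcs_zero h) (by omega)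
  have hrq : Commute r q := pcommute h5 hr hq (by omega)
  have hsq : Commute s q := pcentral h5 hs q
  have hsr : Commute s r := pcentral h5 hs r
  intro i
  induction i with
  | zero => simp [pcomm_one_right]
  | succ i ih =>
      rw [pow_succ', pcomm_mul_right, ih, L1 h5 hq, ← hrdef, ← hsdef,
        shuffle3 hrq hsq hsr]
      have e2 : (i + 1).choose 2 = i.choose 2 + i := by
        rw [Nat.choose_succ_succ, Nat.choose_one_right]; exact Nat.add_comm _ _
      have e3 : (i + 1).choose 3 = i.choose 3 + i.choose 2 := by
        rw [Nat.choose_succ_succ]; exact Nat.add_comm _ _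
      rw [e2, e3]

end L2sec
section L3sec
variable {G : Type*} [Group G]

theorem pow_mul_key {c2 c d : G} (key : c2 * c = c * (c2 * d))
    (hdc2 : Commute d c2) (hdc : Commute d c) :
    ∀ a : ℕ, c2 ^ a * c = c * (c2 ^ a * d ^ a) := by
  intro a
  induction a with
  | zero => simp
  | succ a ih =>
      calc c2 ^ (a + 1) * c = c2 ^ a * (c2 * c) := by rw [pow_succ, mul_assoc]
        _ = c2 ^ a * c * (c2 * d) := by rw [key, mul_assoc]
        _ = c * (c2 ^ a * d ^ a) * (c2 * d) := by rw [ih]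
        _ = c * (c2 ^ a * (d ^ a * (c2 * d))) := by simp only [mul_assoc]
        _ = c * (c2 ^ a * (c2 * (d ^ a * d))) := by rw [mul_left_swap (hdc2.pow_left a)]
        _ = c * (c2 ^ (a + 1) * d ^ (a + 1)) := by
            rw [pow_succ, pow_succ]; simp only [mul_assoc]

theorem shuffle5 {c c2 c3 c4 d : G} (key : c2 * c = c * (c2 * d))
    (h3c : Commute c3 c) (h4c : Commute c4 c) (hdc : Commute d c)
    (h32 : Commute c3 c2) (h42 : Commute c4 c2) (hd2 : Commute d c2)
    (h43 : Commute c4 c3) (hd3 : Commute d c3) (hd4 : Commute d c4)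
    (i a b g : ℕ) :
    c ^ i * (c2 ^ a * (c3 ^ b * (c4 ^ g * d ^ b))) * c * (c2 ^ i * (c3 ^ a * c4 ^ b)) =
      c ^ (i + 1) * (c2 ^ (a + i) * (c3 ^ (b + a) * (c4 ^ (g + b) * d ^ (b + a)))) := by
  have key' : ∀ t : G, c2 ^ a * (c * t) = c * (c2 ^ a * (d ^ a * t)) := by
    intro t
    rw [← mul_assoc, pow_mul_key key hd2 hdc a]
    simp only [mul_assoc]
  rw [pow_succ, pow_add, pow_add, pow_add, pow_add]
  simp only [mul_assoc]
  rw [mul_left_swap (hdc.pow_left b), mul_left_swap (h4c.pow_left g),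
    mul_left_swap (h3c.pow_left b), key']
  -- now : c^i * (c * (c2^a * (d^a * (c3^b * (c4^g * (d^b * (c2^i * (c3^a * c4^b))))))))
  rw [mul_left_swap (hd2.pow_pow b i), mul_left_swap (h42.pow_pow g i),
    mul_left_swap (h32.pow_pow b i), mul_left_swap (hd2.pow_pow a i)]
  -- c^i * (c * (c2^a * (c2^i * (d^a * (c3^b * (c4^g * (d^b * (c3^a * c4^b))))))))
  rw [mul_left_swap (hd3.pow_pow a b)]
  -- c^i * (c * (c2^a * (c2^i * (c3^b * (d^a * (c4^g * (d^b * (c3^a * c4^b))))))))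
  rw [mul_left_swap (hd3.pow_pow b a), mul_left_swap (h43.pow_pow g a),
    mul_left_swap (hd3.pow_pow a a)]
  -- ... c3^b * (c3^a * (d^a * (c4^g * (d^b * c4^b))))
  rw [mul_left_swap (hd4.pow_pow a g), (hd4.pow_pow b b).eq, mul_left_swap (hd4.pow_pow a b),
    ← pow_add d, ← pow_add d, Nat.add_comm a b]

end L3sec

section
variable {G : Type*} [Group G] (h5 : (⊤ : Subgroup G).lowerCentralSeries 5 = ⊥)
include h5

theorem L3 (x y : G) :
    ∀ i : ℕ, pcomm x (y ^ i) =
      (pcomm x y) ^ i * ((pcomm (pcomm x y) y) ^ (i.choose 2) *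
        ((pcomm (pcomm (pcomm x y) y) y) ^ (i.choose 3) *
          ((pcomm (pcomm (pcomm (pcomm x y) y) y) y) ^ (i.choose 4) *
            (pcomm (pcomm (pcomm x y) y) (pcomm x y)) ^ (i.choose 3)))) := by
  set c := pcomm x y with hcdef
  set c2 := pcomm c y with hc2def
  set c3 := pcomm c2 y with hc3def
  set c4 := pcomm c3 y with hc4def
  set d := pcomm c2 c with hddef
  have hc : c ∈ (⊤ : Subgroup G).lowerCentralSeries 1 :=
    pcomm_mem_of_le (mem_lcs_zero x) (mem_lcs_zero y) (by omega)
  have hc2 : c2 ∈ (⊤ : Subgroup G).lowerCentralSeries 2 := pcomm_mem_of_le hc (mem_lcs_zero y) (by omega)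
  have hc3 : c3 ∈ (⊤ : Subgroup G).lowerCentralSeries 3 := pcomm_mem_of_le hc2 (mem_lcs_zero y) (by omega)
  have hc4 : c4 ∈ (⊤ : Subgroup G).lowerCentralSeries 4 := pcomm_mem_of_le hc3 (mem_lcs_zero y) (by omega)
  have hd : d ∈ (⊤ : Subgroup G).lowerCentralSeries 4 := pcomm_mem_of_le hc2 hc (by omega)
  have key : c2 * c = c * (c2 * d) := by rw [mul_comm_pcomm c2 c, mul_assoc, hddef]
  intro i
  induction i with
  | zero => simp [pcomm_one_right]
  | succ i ih =>
      rw [pow_succ', pcomm_mul_right, ih, L2 h5 hc y, ← hc2def, ← hc3def, ← hc4def,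
        shuffle5 key (pcommute h5 hc3 hc (by omega)) (pcentral h5 hc4 c) (pcentral h5 hd c)
          (pcommute h5 hc3 hc2 (by omega)) (pcentral h5 hc4 c2) (pcentral h5 hd c2)
          (pcentral h5 hc4 c3) (pcentral h5 hd c3) (pcentral h5 hd c4)]
      have e2 : (i + 1).choose 2 = i.choose 2 + i := by
        rw [Nat.choose_succ_succ, Nat.choose_one_right]; exact Nat.add_comm _ _
      have e3 : (i + 1).choose 3 = i.choose 3 + i.choose 2 := by
        rw [Nat.choose_succ_succ]; exact Nat.add_comm _ _
      have e4 : (i + 1).choose 4 = i.choose 4 + i.choose 3 := by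
        rw [Nat.choose_succ_succ]; exact Nat.add_comm _ _
      rw [e2, e3, e4]
end
section Divis

theorem div_choose2 {e : ℕ} (he : 1 ≤ e) : (2 ^ e).choose 2 = 2 ^ (e - 1) * (2 ^ e - 1) := by
  have h1 : (2 ^ e).choose 2 * 2 = (2 ^ e).choose 1 * (2 ^ e - 1) :=
    Nat.choose_succ_right_eq (2 ^ e) 1
  rw [Nat.choose_one_right] at h1
  have h2 : 2 ^ e = 2 ^ (e - 1) * 2 := by
    rw [← pow_succ]; congr 1; omega
  apply Nat.eq_of_mul_eq_mul_right (show 0 < 2 by norm_num)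
  rw [h1, h2]; ring

theorem div_choose3 {e : ℕ} (he : 1 ≤ e) : 2 ^ e ∣ (2 ^ e).choose 3 := by
  have h1 : (2 ^ e).choose 3 * 3 = (2 ^ e).choose 2 * (2 ^ e - 2) :=
    Nat.choose_succ_right_eq (2 ^ e) 2
  have h2 : 2 ^ e = 2 * 2 ^ (e - 1) := by
    rw [← pow_succ']; congr 1; omega
  have h3 : 2 ^ e - 2 = 2 * (2 ^ (e - 1) - 1) := by omega
  have h4 : (2 ^ e).choose 3 * 3 = 2 ^ e * ((2 ^ e - 1) * (2 ^ (e - 1) - 1)) := by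
    rw [h1, div_choose2 he, h3, h2]; ring
  have h5 : 2 ^ e ∣ (2 ^ e).choose 3 * 3 := Dvd.intro _ h4.symm
  exact (Nat.Coprime.pow_left e (by norm_num : Nat.Coprime 2 3)).dvd_of_dvd_mul_right h5

theorem div_choose3' {e : ℕ} (he : 1 ≤ e) : 2 ^ (e - 1) ∣ (2 ^ e).choose 3 :=
  dvd_trans (pow_dvd_pow 2 (by omega)) (div_choose3 he)

theorem div_choose2' {e : ℕ} (he : 1 ≤ e) : 2 ^ (e - 1) ∣ (2 ^ e).choose 2 :=
  (div_choose2 he) ▸ Dvd.intro _ rfl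

theorem div_two_choose4 {e : ℕ} (he : 1 ≤ e) : 2 ^ (e - 1) ∣ 2 * (2 ^ e).choose 4 := by
  obtain ⟨t, ht⟩ := div_choose3 he
  have h1 : (2 ^ e).choose 4 * 4 = (2 ^ e).choose 3 * (2 ^ e - 3) :=
    Nat.choose_succ_right_eq (2 ^ e) 3
  have h2 : 2 ^ e = 2 ^ (e - 1) * 2 := by
    rw [← pow_succ]; congr 1; omega
  have h4 : (2 * (2 ^ e).choose 4) * 2 = (2 ^ (e - 1) * (t * (2 ^ e - 3))) * 2 := by
    have : (2 ^ e).choose 4 * 4 = 2 ^ (e - 1) * (t * (2 ^ e - 3)) * 2 := by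
      rw [h1, ht, h2]; ring
    omega
  exact ⟨_, Nat.eq_of_mul_eq_mul_right (by norm_num) h4⟩

end Divis
section R1sec
variable {G : Type*} [Group G]

/-- kill powers of `γ₄ = LCS 3` elements whose exponent is divisible by `2^(e-1)` -/
theorem killpow {e : ℕ} (hg4 : ∀ g ∈ (⊤ : Subgroup G).lowerCentralSeries 3, g ^ 2 ^ (e - 1) = 1)
    {g : G} (hg : g ∈ (⊤ : Subgroup G).lowerCentralSeries 3) {k : ℕ} (hk : 2 ^ (e - 1) ∣ k) :
    g ^ k = 1 := by
  obtain ⟨t, rfl⟩ := hk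
  rw [pow_mul, hg4 g hg, one_pow]

theorem R1 {e : ℕ} (he : 1 ≤ e) (h5 : (⊤ : Subgroup G).lowerCentralSeries 5 = ⊥)
    (hexp : ∀ g : G, g ^ (2 ^ e) = 1)
    (hg4 : ∀ g ∈ (⊤ : Subgroup G).lowerCentralSeries 3, g ^ 2 ^ (e - 1) = 1) (x y : G) :
    (pcomm (pcomm x y) y) ^ ((2 ^ e).choose 2) *
      (pcomm (pcomm (pcomm (pcomm x y) y) y) y) ^ ((2 ^ e).choose 4) = 1 := by
  have h := L3 h5 x y (2 ^ e)
  set c := pcomm x y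
  set c2 := pcomm c y
  set c3 := pcomm c2 y
  set c4 := pcomm c3 y
  set d := pcomm c2 c
  have hc : c ∈ (⊤ : Subgroup G).lowerCentralSeries 1 :=
    pcomm_mem_of_le (mem_lcs_zero x) (mem_lcs_zero y) (by omega)
  have hc2 : c2 ∈ (⊤ : Subgroup G).lowerCentralSeries 2 := pcomm_mem_of_le hc (mem_lcs_zero y) (by omega)
  have hc3 : c3 ∈ (⊤ : Subgroup G).lowerCentralSeries 3 := pcomm_mem_of_le hc2 (mem_lcs_zero y) (by omega)
  have hd : d ∈ (⊤ : Subgroup G).lowerCentralSeries 4 := pcomm_mem_of_le hc2 hc (by omega)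
  have hd' : d ∈ (⊤ : Subgroup G).lowerCentralSeries 3 := Subgroup.lowerCentralSeries_antitone _ (by omega) hd
  rw [hexp y, pcomm_one_right, hexp c, killpow hg4 hc3 (div_choose3' he),
    killpow hg4 hd' (div_choose3' he), one_mul, one_mul, mul_one] at h
  exact h.symm

end R1sec
section SwapSec
variable {G : Type*} [Group G]

theorem pcomm_self (a : G) : pcomm a a = 1 := by simp only [pcomm]; group

variable (h5 : (⊤ : Subgroup G).lowerCentralSeries 5 = ⊥)
include h5

theorem swap_lemma (x y : G) :
    pcomm (pcomm (pcomm x y) x) y =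
      pcomm (pcomm (pcomm x y) y) x *
        (pcomm (pcomm (pcomm x y) x) (pcomm x y) *
          pcomm (pcomm (pcomm x y) y) (pcomm x y)) := by
  set c := pcomm x y with hc_def
  set u := pcomm c x with hu_def
  set v := pcomm c y with hv_def
  have hc : c ∈ (⊤ : Subgroup G).lowerCentralSeries 1 :=
    pcomm_mem_of_le (mem_lcs_zero x) (mem_lcs_zero y) (by omega)
  have hu : u ∈ (⊤ : Subgroup G).lowerCentralSeries 2 := pcomm_mem_of_le hc (mem_lcs_zero x) (by omega)
  have hv : v ∈ (⊤ : Subgroup G).lowerCentralSeries 2 := pcomm_mem_of_le hc (mem_lcs_zero y) (by omega)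
  have hVx : pcomm v x ∈ (⊤ : Subgroup G).lowerCentralSeries 3 := pcomm_mem_of_le hv (mem_lcs_zero x) (by omega)
  have hd1 : pcomm u c ∈ (⊤ : Subgroup G).lowerCentralSeries 4 := pcomm_mem_of_le hu hc (by omega)
  have hd2 : pcomm v c ∈ (⊤ : Subgroup G).lowerCentralSeries 4 := pcomm_mem_of_le hv hc (by omega)
  have eq1 : pcomm c (x * y) = v * u * pcomm u y := by
    rw [pcomm_mul_right]
  have eq2 : pcomm c (x * y) = (u * pcomm u c) * v * (pcomm v c * pcomm v x) := by
    have exy : x * y = y * (x * c) := by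
      rw [← mul_assoc, ← mul_comm_pcomm]
    rw [exy, pcomm_mul_right c y (x * c)]
    congr 1
    · congr 1
      rw [pcomm_mul_right c x c, pcomm_self, one_mul]
    · rw [pcomm_mul_right v x c,
        ptriv h5 hVx hc (by omega), mul_one]
  have key : v * u * pcomm u y = (u * pcomm u c) * v * (pcomm v c * pcomm v x) := by
    rw [← eq1, eq2]
  have huv : Commute u v := pcommute h5 hu hv (by omega)
  have h1 : Commute (pcomm u c) v := pcentral h5 hd1 v
  have h2 : Commute (pcomm v c) (pcomm v x) := pcentral h5 hd2 (pcomm v x)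
  have h3 : Commute (pcomm u c) (pcomm v x) := pcentral h5 hd1 (pcomm v x)
  apply mul_left_cancel (a := u)
  apply mul_left_cancel (a := v)
  calc v * (u * pcomm u y)
      = v * u * pcomm u y := by rw [mul_assoc]
    _ = (u * pcomm u c) * v * (pcomm v c * pcomm v x) := key
    _ = u * (pcomm u c * (v * (pcomm v c * pcomm v x))) := by simp only [mul_assoc]
    _ = u * (v * (pcomm u c * (pcomm v c * pcomm v x))) := by rw [mul_left_swap h1]
    _ = u * (v * (pcomm u c * (pcomm v x * pcomm v c))) := by rw [h2.eq]
    _ = u * (v * (pcomm v x * (pcomm u c * pcomm v c))) := by rw [mul_left_swap h3]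
    _ = v * (u * (pcomm v x * (pcomm u c * pcomm v c))) := mul_left_swap huv _

end SwapSec
section FinalSec
variable {G : Type*} [Group G]

theorem swap_corr (h5 : (⊤ : Subgroup G).lowerCentralSeries 5 = ⊥) (x y w : G) :
    pcomm (pcomm (pcomm (pcomm x y) x) y) w =
      pcomm (pcomm (pcomm (pcomm x y) y) x) w := by
  have hc : pcomm x y ∈ (⊤ : Subgroup G).lowerCentralSeries 1 :=
    pcomm_mem_of_le (mem_lcs_zero x) (mem_lcs_zero y) (by omega)
  have hu : pcomm (pcomm x y) x ∈ (⊤ : Subgroup G).lowerCentralSeries 2 :=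
    pcomm_mem_of_le hc (mem_lcs_zero x) (by omega)
  have hv : pcomm (pcomm x y) y ∈ (⊤ : Subgroup G).lowerCentralSeries 2 :=
    pcomm_mem_of_le hc (mem_lcs_zero y) (by omega)
  have hVx : pcomm (pcomm (pcomm x y) y) x ∈ (⊤ : Subgroup G).lowerCentralSeries 3 :=
    pcomm_mem_of_le hv (mem_lcs_zero x) (by omega)
  have hd1 : pcomm (pcomm (pcomm x y) x) (pcomm x y) ∈ (⊤ : Subgroup G).lowerCentralSeries 4 :=
    pcomm_mem_of_le hu hc (by omega)
  have hd2 : pcomm (pcomm (pcomm x y) y) (pcomm x y) ∈ (⊤ : Subgroup G).lowerCentralSeries 4 :=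
    pcomm_mem_of_le hv hc (by omega)
  have hVxw : pcomm (pcomm (pcomm (pcomm x y) y) x) w ∈ (⊤ : Subgroup G).lowerCentralSeries 4 :=
    pcomm_mem_of_le hVx (mem_lcs_zero w) (by omega)
  rw [swap_lemma h5 x y, pcomm_mul_left,
    ptriv h5 hVxw (mul_mem hd1 hd2) (by omega),
    pcomm_central h5 (mul_mem hd1 hd2) w, mul_one, mul_one]

end FinalSec
/-- class ≤ 5, `e > 2`, exponent dividing `2^e`,
`γ₄(G)^{2^{e-1}} = 1`, `γ₃(G)^{2^e} = 1` imply
`[x,y]^{2^e} = ([x,y,x,x,y]·[x,y,y,y,x])^{C(2^e,4)}`. -/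
theorem class_le_five_comm_power_formula {G : Type*} [Group G] (e : ℕ) (he : 2 < e)
    (h5 : (⊤ : Subgroup G).lowerCentralSeries 5 = ⊥)
    (hexp : ∀ g : G, g ^ (2 ^ e) = 1)
    (hg4 : ∀ g ∈ (⊤ : Subgroup G).lowerCentralSeries 3, g ^ (2 ^ (e - 1)) = 1)
    (hg3 : ∀ g ∈ (⊤ : Subgroup G).lowerCentralSeries 2, g ^ (2 ^ e) = 1) :
    ∀ x y : G,
      (pcomm x y) ^ (2 ^ e)
        = (pcomm (pcomm (pcomm (pcomm x y) x) x) y *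
            pcomm (pcomm (pcomm (pcomm x y) y) y) x) ^ ((2 ^ e).choose 4) := by
  intro x y
  have he' : 1 ≤ e := by omega
  set K := (2 ^ e).choose 2 with hK_def
  set M := (2 ^ e).choose 4 with hM_def
  set w := y * x with hw_def
  set c := pcomm x y with hc_def
  set u := pcomm c x with hu_def
  set v := pcomm c y with hv_def
  set A := pcomm u x with hA_def
  set B := pcomm u y with hB_def
  set Vx := pcomm v x with hVx_def
  set Vy := pcomm v y with hVy_def
  set uxx := pcomm A x with huxx_def
  set uxy := pcomm A y with huxy_def
  set uyx := pcomm B x with huyx_def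
  set uyy := pcomm B y with huyy_def
  set vxx := pcomm Vx x with hvxx_def
  set vxy := pcomm Vx y with hvxy_def
  set vyx := pcomm Vy x with hvyx_def
  set vyy := pcomm Vy y with hvyy_def
  -- memberships
  have hc1 : c ∈ (⊤ : Subgroup G).lowerCentralSeries 1 :=
    pcomm_mem_of_le (mem_lcs_zero x) (mem_lcs_zero y) (by omega)
  have hu2 : u ∈ (⊤ : Subgroup G).lowerCentralSeries 2 := pcomm_mem_of_le hc1 (mem_lcs_zero x) (by omega)
  have hv2 : v ∈ (⊤ : Subgroup G).lowerCentralSeries 2 := pcomm_mem_of_le hc1 (mem_lcs_zero y) (by omega)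
  have hA3 : A ∈ (⊤ : Subgroup G).lowerCentralSeries 3 := pcomm_mem_of_le hu2 (mem_lcs_zero x) (by omega)
  have hB3 : B ∈ (⊤ : Subgroup G).lowerCentralSeries 3 := pcomm_mem_of_le hu2 (mem_lcs_zero y) (by omega)
  have hVx3 : Vx ∈ (⊤ : Subgroup G).lowerCentralSeries 3 := pcomm_mem_of_le hv2 (mem_lcs_zero x) (by omega)
  have hVy3 : Vy ∈ (⊤ : Subgroup G).lowerCentralSeries 3 := pcomm_mem_of_le hv2 (mem_lcs_zero y) (by omega)
  have huxx4 : uxx ∈ (⊤ : Subgroup G).lowerCentralSeries 4 := pcomm_mem_of_le hA3 (mem_lcs_zero x) (by omega)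
  have huxy4 : uxy ∈ (⊤ : Subgroup G).lowerCentralSeries 4 := pcomm_mem_of_le hA3 (mem_lcs_zero y) (by omega)
  have huyx4 : uyx ∈ (⊤ : Subgroup G).lowerCentralSeries 4 := pcomm_mem_of_le hB3 (mem_lcs_zero x) (by omega)
  have huyy4 : uyy ∈ (⊤ : Subgroup G).lowerCentralSeries 4 := pcomm_mem_of_le hB3 (mem_lcs_zero y) (by omega)
  have hvxx4 : vxx ∈ (⊤ : Subgroup G).lowerCentralSeries 4 := pcomm_mem_of_le hVx3 (mem_lcs_zero x) (by omega)
  have hvxy4 : vxy ∈ (⊤ : Subgroup G).lowerCentralSeries 4 := pcomm_mem_of_le hVx3 (mem_lcs_zero y) (by omega)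
  have hvyx4 : vyx ∈ (⊤ : Subgroup G).lowerCentralSeries 4 := pcomm_mem_of_le hVy3 (mem_lcs_zero x) (by omega)
  have hvyy4 : vyy ∈ (⊤ : Subgroup G).lowerCentralSeries 4 := pcomm_mem_of_le hVy3 (mem_lcs_zero y) (by omega)
  have l43 : (⊤ : Subgroup G).lowerCentralSeries 4 ≤ (⊤ : Subgroup G).lowerCentralSeries 3 :=
    Subgroup.lowerCentralSeries_antitone _ (by omega)
  -- step (a) : v ^ K = (vyy ^ M)⁻¹
  have r1a := R1 he' h5 hexp hg4 x y
  rw [← hc_def, ← hv_def, ← hVy_def, ← hvyy_def, ← hK_def, ← hM_def] at r1a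
  have hv_pow : v ^ K = (vyy ^ M)⁻¹ := eq_inv_of_mul_eq_one_left r1a
  -- step (b) : u ^ K = (uxx ^ M)⁻¹
  have hz4 : ⁅u, c⁆ ∈ (⊤ : Subgroup G).lowerCentralSeries 4 :=
    lcs_comm_le 1 2 (Subgroup.commutator_mem_commutator hu2 hc1)
  have Eyx2 : pcomm (pcomm y x) x = u⁻¹ * ⁅u, c⁆ := by
    rw [pcomm_swap x y, pcomm_inv_left, ← hc_def, ← hu_def]
    group
  have hAu : Commute u A := (pcommute h5 hA3 hu2 (by omega)).symm
  have Eyx3 : pcomm (u⁻¹ * ⁅u, c⁆) x = A⁻¹ := by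
    have h1 : pcomm u⁻¹ x = A⁻¹ := by
      rw [pcomm_inv_left, ← hA_def, hAu.inv_right.eq, mul_inv_cancel_right]
    rw [pcomm_mul_left, h1, pcomm_central h5 hz4 x, mul_one,
      ptriv h5 (inv_mem hA3) hz4 (by omega), mul_one]
  have Eyx4 : pcomm A⁻¹ x = uxx⁻¹ := by
    rw [pcomm_inv_left, ← huxx_def, (pcentral h5 huxx4 A).inv_left.symm.eq,
      mul_inv_cancel_right]
  have r1b := R1 he' h5 hexp hg4 y x
  rw [Eyx2, Eyx3, Eyx4, ← hK_def, ← hM_def] at r1b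
  have hiz : Commute u⁻¹ ⁅u, c⁆ := (pcentral h5 hz4 u⁻¹).symm
  rw [hiz.mul_pow, killpow hg4 (l43 hz4) (div_choose2' he'), mul_one, inv_pow, inv_pow] at r1b
  have hu_pow : u ^ K = (uxx ^ M)⁻¹ := by
    have h := eq_inv_of_mul_eq_one_left r1b
    rw [inv_inv] at h
    rw [← h, inv_inv]
  -- step (c) : the relation at (x, w) with w = y * x
  have hcw2 : pcomm c w ∈ (⊤ : Subgroup G).lowerCentralSeries 2 :=
    pcomm_mem_of_le hc1 (mem_lcs_zero w) (by omega)
  have E1 : pcomm x w = c * u := by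
    rw [hw_def, pcomm_mul_right, pcomm_self, one_mul, ← hc_def, ← hu_def]
  have E2 : pcomm c w = u * v * Vx := by
    rw [hw_def, pcomm_mul_right, ← hu_def, ← hv_def, ← hVx_def]
  have E3 : pcomm u w = A * B * uyx := by
    rw [hw_def, pcomm_mul_right, ← hA_def, ← hB_def, ← huyx_def]
  have E4 : pcomm v w = Vx * Vy * vyx := by
    rw [hw_def, pcomm_mul_right, ← hVx_def, ← hVy_def, ← hvyx_def]
  set QQ := Vx * (A * B * uyx) with hQQ_def
  have hQQ3 : QQ ∈ (⊤ : Subgroup G).lowerCentralSeries 3 :=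
    mul_mem hVx3 (mul_mem (mul_mem hA3 hB3) (l43 huyx4))
  have Et : pcomm (pcomm x w) w = (u * v) * QQ := by
    rw [E1, pcomm_mul_left, ptriv h5 hcw2 hu2 (by omega), mul_one, E2, E3, hQQ_def]
    simp only [mul_assoc]
  have huv : Commute u v := pcommute h5 hu2 hv2 (by omega)
  have Hpow : (pcomm (pcomm x w) w) ^ K = u ^ K * v ^ K := by
    rw [Et, (pcommute h5 (mul_mem hu2 hv2) hQQ3 (by omega)).mul_pow,
      killpow hg4 hQQ3 (div_choose2' he'), mul_one, huv.mul_pow]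
  -- weight-5 expansions
  have FA : pcomm A w = uxx * uxy := by
    rw [hw_def, pcomm_mul_right, ← huxx_def, ← huxy_def,
      pcomm_central h5 (pcomm_mem_of_le hA3 (mem_lcs_zero y) (by omega)) x, mul_one]
  have FB : pcomm B w = uyx * uyy := by
    rw [hw_def, pcomm_mul_right, ← huyx_def, ← huyy_def,
      pcomm_central h5 (pcomm_mem_of_le hB3 (mem_lcs_zero y) (by omega)) x, mul_one]
  have FVx : pcomm Vx w = vxx * vxy := by
    rw [hw_def, pcomm_mul_right, ← hvxx_def, ← hvxy_def,
      pcomm_central h5 (pcomm_mem_of_le hVx3 (mem_lcs_zero y) (by omega)) x, mul_one]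
  have FVy : pcomm Vy w = vyx * vyy := by
    rw [hw_def, pcomm_mul_right, ← hvyx_def, ← hvyy_def,
      pcomm_central h5 (pcomm_mem_of_le hVy3 (mem_lcs_zero y) (by omega)) x, mul_one]
  -- level 3 and 4 commutators of (x, w)
  have huvw3 : pcomm (u * v) w ∈ (⊤ : Subgroup G).lowerCentralSeries 3 :=
    pcomm_mem_of_le (mul_mem hu2 hv2) (mem_lcs_zero w) (by omega)
  have F1 : pcomm (u * v) w = (A * B * uyx) * (Vx * Vy * vyx) := by
    rw [pcomm_mul_left, ptriv h5 (pcomm_mem_of_le hu2 (mem_lcs_zero w) (by omega : (3:ℕ) ≤ 2+0+1)) hv2 (by omega),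
      mul_one, E3, E4]
  have hRw4 : pcomm QQ w ∈ (⊤ : Subgroup G).lowerCentralSeries 4 :=
    pcomm_mem_of_le hQQ3 (mem_lcs_zero w) (by omega)
  have G3 : pcomm (pcomm (pcomm x w) w) w = pcomm (u * v) w * pcomm QQ w := by
    rw [Et, pcomm_mul_left, ptriv h5 huvw3 hQQ3 (by omega), mul_one]
  have G4 : pcomm (pcomm (pcomm (pcomm x w) w) w) w =
      ((uxx * uxy) * (uyx * uyy)) * ((vxx * vxy) * (vyx * vyy)) := by
    rw [G3, pcomm_mul_left,
      ptriv h5 (pcomm_mem_of_le huvw3 (mem_lcs_zero w) (by omega : (4:ℕ) ≤ 3+0+1)) hRw4 (by omega),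
      mul_one, pcomm_central h5 hRw4 w, mul_one, F1, pcomm_mul_left,
      ptriv h5 (pcomm_mem_of_le (mul_mem (mul_mem hA3 hB3) (l43 huyx4)) (mem_lcs_zero w) (by omega : (4:ℕ) ≤ 3+0+1))
        (mul_mem (mul_mem hVx3 hVy3) (l43 hvyx4)) (by omega), mul_one]
    congr 1
    · -- pcomm (A * B * uyx) w = (uxx*uxy) * (uyx*uyy)
      rw [pcomm_mul_left,
        pcomm_central h5 (pcomm_mem_of_le (mul_mem hA3 hB3) (mem_lcs_zero w) (by omega : (4:ℕ) ≤ 3+0+1)) uyx,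
        mul_one, pcomm_central h5 huyx4 w, mul_one, pcomm_mul_left,
        ptriv h5 (pcomm_mem_of_le hA3 (mem_lcs_zero w) (by omega : (4:ℕ) ≤ 3+0+1)) hB3 (by omega),
        mul_one, FA, FB]
    · rw [pcomm_mul_left,
        pcomm_central h5 (pcomm_mem_of_le (mul_mem hVx3 hVy3) (mem_lcs_zero w) (by omega : (4:ℕ) ≤ 3+0+1)) vyx,
        mul_one, pcomm_central h5 hvyx4 w, mul_one, pcomm_mul_left,
        ptriv h5 (pcomm_mem_of_le hVx3 (mem_lcs_zero w) (by omega : (4:ℕ) ≤ 3+0+1)) hVy3 (by omega),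
        mul_one, FVx, FVy]
  -- assemble
  have I1 : uyx = vxx := by
    rw [huyx_def, hB_def, hu_def, hc_def, hvxx_def, hVx_def, hv_def]
    exact swap_corr h5 x y x
  have I2 : uyy = vxy := by
    rw [huyy_def, hB_def, hu_def, hc_def, hvxy_def, hVx_def, hv_def]
    exact swap_corr h5 x y y
  have r1c := R1 he' h5 hexp hg4 x w
  rw [← hK_def, ← hM_def, Hpow, G4, hu_pow, hv_pow, I1, I2] at r1c
  set p := vxx * vxy with hp_def
  have hp4 : p ∈ (⊤ : Subgroup G).lowerCentralSeries 4 := mul_mem hvxx4 hvxy4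
  have Hre : ((uxx * uxy) * p) * (p * (vyx * vyy)) =
      (uxx * vyy) * ((uxy * vyx) * (p * p)) := by
    simp only [mul_assoc]
    rw [(pcentral h5 hvyx4 vyy).eq, mul_left_swap (pcentral h5 hp4 vyy),
      mul_left_swap (pcentral h5 hp4 vyy), mul_left_swap (pcentral h5 huxy4 vyy),
      (pcentral h5 hp4 vyx).eq, mul_left_swap (pcentral h5 hp4 vyx)]
  have hpp : (p * p) ^ M = 1 := by
    rw [← sq, ← pow_mul, killpow hg4 (l43 hp4) (hM_def ▸ div_two_choose4 he')]
  have HP8 : (((uxx * uxy) * p) * (p * (vyx * vyy))) ^ M =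
      uxx ^ M * (vyy ^ M * (uxy * vyx) ^ M) := by
    rw [Hre, (pcentral h5 (mul_mem huxx4 hvyy4) _).mul_pow,
      (pcentral h5 (mul_mem huxy4 hvyx4) _).mul_pow, hpp, mul_one,
      (pcentral h5 huxx4 vyy).mul_pow, mul_assoc]
  rw [HP8] at r1c
  simp only [mul_assoc] at r1c
  rw [mul_left_swap ((pcentral h5 hvyy4 uxx).pow_pow M M).inv_left] at r1c
  simp only [inv_mul_cancel_left] at r1c
  rw [hexp c]
  exact r1c.symm
end

section
/- Let G be a group in which every 2-generated subgroup is nilpotent of class ≤ 5, and suppose [[a,b]^2, a] = 1 for all a, b ∈ G. Then 1 = [a,b,a]^2 · [a,b,a,[a,b]] for all a, b ∈ G. -/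
open scoped commutatorElement

lemma pcomm_eq_commutatorElement_s13 {G : Type*} [Group G] (x y : G) :
    pcomm x y = ⁅x⁻¹, y⁻¹⁆ := by
  simp [pcomm, commutatorElement_def]

/-- In a group of class ≤ 5, `⁅γ₄, γ₁⁆ = ⊥` (weight 5+2 > 5). -/
lemma comm41_bot {K : Type*} [Group K]
    (h5 : (⊤ : Subgroup K).lowerCentralSeries 5 = ⊥) :
    ⁅(⊤ : Subgroup K).lowerCentralSeries 4, (⊤ : Subgroup K).lowerCentralSeries 1⁆ = ⊥ := by
  rw [Subgroup.commutator_comm]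
  have h1 : (⊤ : Subgroup K).lowerCentralSeries 1 = ⁅(⊤ : Subgroup K), ⊤⁆ := by
    rw [show (⊤ : Subgroup K).lowerCentralSeries 1 = ⁅(⊤ : Subgroup K).lowerCentralSeries 0, ⊤⁆ from rfl,
      lowerCentralSeries_zero]
  rw [h1]
  apply Subgroup.commutator_commutator_eq_bot_of_rotate <;>
  · try rw [Subgroup.commutator_comm (⊤ : Subgroup K)]
    rw [show ⁅(⊤ : Subgroup K).lowerCentralSeries 4, (⊤ : Subgroup K)⁆ = (⊤ : Subgroup K).lowerCentralSeries 5 from rfl, h5]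
    simp

/-- In a group of class ≤ 5, `⁅γ₃, γ₁⁆ = ⊥` (weight 4+2 > 5). -/
lemma comm31_bot {K : Type*} [Group K]
    (h5 : (⊤ : Subgroup K).lowerCentralSeries 5 = ⊥) :
    ⁅(⊤ : Subgroup K).lowerCentralSeries 3, (⊤ : Subgroup K).lowerCentralSeries 1⁆ = ⊥ := by
  rw [Subgroup.commutator_comm]
  have h1 : (⊤ : Subgroup K).lowerCentralSeries 1 = ⁅(⊤ : Subgroup K), ⊤⁆ := by
    rw [show (⊤ : Subgroup K).lowerCentralSeries 1 = ⁅(⊤ : Subgroup K).lowerCentralSeries 0, ⊤⁆ from rfl,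
      lowerCentralSeries_zero]
  rw [h1]
  apply Subgroup.commutator_commutator_eq_bot_of_rotate <;>
  · try rw [Subgroup.commutator_comm (⊤ : Subgroup K)]
    rw [show ⁅(⊤ : Subgroup K).lowerCentralSeries 3, (⊤ : Subgroup K)⁆ = (⊤ : Subgroup K).lowerCentralSeries 4 from rfl,
      show ⁅(⊤ : Subgroup K).lowerCentralSeries 4, (⊤ : Subgroup K)⁆ = (⊤ : Subgroup K).lowerCentralSeries 5 from rfl, h5]

/-- In a group of class ≤ 5, `⁅γ₃, γ₂⁆ = ⊥` (weight 4+3 > 5). -/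
lemma comm32_bot {K : Type*} [Group K]
    (h5 : (⊤ : Subgroup K).lowerCentralSeries 5 = ⊥) :
    ⁅(⊤ : Subgroup K).lowerCentralSeries 3, (⊤ : Subgroup K).lowerCentralSeries 2⁆ = ⊥ := by
  rw [Subgroup.commutator_comm]
  rw [show (⊤ : Subgroup K).lowerCentralSeries 2 = ⁅(⊤ : Subgroup K).lowerCentralSeries 1, ⊤⁆ from rfl]
  apply Subgroup.commutator_commutator_eq_bot_of_rotate
  · rw [Subgroup.commutator_comm (⊤ : Subgroup K),
      show ⁅(⊤ : Subgroup K).lowerCentralSeries 3, (⊤ : Subgroup K)⁆ = (⊤ : Subgroup K).lowerCentralSeries 4 from rfl]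
    exact comm41_bot h5
  · rw [comm31_bot h5]
    simp

/-- The key identity, proven inside a group of class ≤ 5. -/
lemma aux_identity {K : Type*} [Group K]
    (h5 : (⊤ : Subgroup K).lowerCentralSeries 5 = ⊥) (A B : K)
    (hq : pcomm ((pcomm A B) ^ 2) A = 1) :
    (1 : K) = (pcomm (pcomm A B) A) ^ 2 *
      pcomm (pcomm (pcomm A B) A) (pcomm A B) := by
  set c : K := pcomm A B with hc
  set u : K := pcomm c A with hu
  set e : K := pcomm u c with he
  -- memberships in the lower central series
  have hc1 : c ∈ (⊤ : Subgroup K).lowerCentralSeries 1 := by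
    rw [hc, pcomm_eq_commutatorElement_s13,
      show (⊤ : Subgroup K).lowerCentralSeries 1 = ⁅(⊤ : Subgroup K).lowerCentralSeries 0, ⊤⁆ from rfl,
      lowerCentralSeries_zero]
    exact Subgroup.commutator_mem_commutator (Subgroup.mem_top _) (Subgroup.mem_top _)
  have hu2 : u ∈ (⊤ : Subgroup K).lowerCentralSeries 2 := by
    rw [hu, pcomm_eq_commutatorElement_s13,
      show (⊤ : Subgroup K).lowerCentralSeries 2 = ⁅(⊤ : Subgroup K).lowerCentralSeries 1, ⊤⁆ from rfl]
    exact Subgroup.commutator_mem_commutator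
      (((⊤ : Subgroup K).lowerCentralSeries 1).inv_mem hc1) (Subgroup.mem_top _)
  have he3 : e ∈ (⊤ : Subgroup K).lowerCentralSeries 3 := by
    rw [he, pcomm_eq_commutatorElement_s13,
      show (⊤ : Subgroup K).lowerCentralSeries 3 = ⁅(⊤ : Subgroup K).lowerCentralSeries 2, ⊤⁆ from rfl]
    exact Subgroup.commutator_mem_commutator
      (((⊤ : Subgroup K).lowerCentralSeries 2).inv_mem hu2) (Subgroup.mem_top _)
  -- e commutes with u
  have heu : e * u = u * e := by
    have : ⁅e, u⁆ ∈ (⊥ : Subgroup K) := by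
      rw [← comm32_bot h5]
      exact Subgroup.commutator_mem_commutator he3 hu2
    rw [Subgroup.mem_bot] at this
    exact commutatorElement_eq_one_iff_mul_comm.mp this
  -- algebra: pcomm (c^2) A = u * (c⁻¹ * u * c) = u * (u * e) = u^2 * e
  have h1 : pcomm (c ^ 2) A = (c⁻¹ * u * c) * u := by
    rw [hu, hc]; unfold pcomm; rw [sq]; group
  have h2 : c⁻¹ * u * c = u * e := by
    rw [he]; unfold pcomm; group
  have h3 : pcomm (c ^ 2) A = u ^ 2 * e := by
    rw [h1, h2, mul_assoc, heu, ← mul_assoc, ← sq]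
  rw [← h3, hq]

/-- if every 2-generated subgroup of `G` has class ≤ 5 and
`[[a,b]^2,a] = 1` for all `a, b`, then `1 = [a,b,a]^2 · [a,b,a,[a,b]]`. -/
theorem square_comm_expansion {G : Type*} [Group G]
    (h2gen : ∀ a b : G,
      (⊤ : Subgroup (↥(Subgroup.closure ({a, b} : Set G)))).lowerCentralSeries 5 = ⊥)
    (hsq : ∀ a b : G, pcomm ((pcomm a b) ^ 2) a = 1) :
    ∀ a b : G,
      (1 : G) = (pcomm (pcomm a b) a) ^ 2 *
        pcomm (pcomm (pcomm a b) a) (pcomm a b) := by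
  intro a b
  set H := Subgroup.closure ({a, b} : Set G) with hH
  have ha : a ∈ H := Subgroup.subset_closure (by simp)
  have hb : b ∈ H := Subgroup.subset_closure (by simp)
  set A : H := ⟨a, ha⟩ with hA
  set B : H := ⟨b, hb⟩ with hB
  have hq : pcomm ((pcomm A B) ^ 2) A = 1 := by
    apply Subtype.ext
    have := hsq a b
    simpa [pcomm] using this
  have key := aux_identity (h2gen a b) A B hq
  have := congrArg (Subtype.val : H → G) key
  simpa [pcomm] using this
end
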